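/- arXiv:1502.07191 — 6 statements merged into one kernel-verified Lean document; each statement's English description precedes it below -/
import Mathlib

section
/- Fix α ∈ ℂ, a nonzero scalar L ∈ ℂ, and an invertible matrix P ∈ GL₂(ℂ). For k ≥ 1 define Δ_k := ((α,k−1)/(2L)^k)·P·A_k·P⁻¹, and define (s_m)_{m≥1} recursively by s_m = Δ_m − ∑_{j=1}^{m−1} s_j·Δ_{m−j}. Then s_m = Δ_m whenever m is odd, and s_m = Δ_m − ((4α² + 2m − 1)/L^m)·((α,m−1)/(2^{m+1} m))·I whenever m is even, where I is the 2×2 identity matrix. -/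
/-- The bracket symbol `(α, m) = (∏_{n=1}^m (4α² - (2n-1)²)) / (2^{2m} m!)`. -/
noncomputable def jbracket (α : ℂ) (m : ℕ) : ℂ :=
  (∏ n ∈ Finset.Icc 1 m, (4 * α ^ 2 - (2 * (n : ℂ) - 1) ^ 2)) / (2 ^ (2 * m) * m.factorial)

/-- The matrix `A_k` from the jump coefficients. -/
noncomputable def Amat (α : ℂ) (k : ℕ) : Matrix (Fin 2) (Fin 2) ℂ :=
  !![(-1) ^ k * (α ^ 2 + (k : ℂ) / 2 - 1 / 4) / (k : ℂ), -Complex.I * ((k : ℂ) - 1 / 2);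
     (-1) ^ k * ((k : ℂ) - 1 / 2) * Complex.I, (α ^ 2 + (k : ℂ) / 2 - 1 / 4) / (k : ℂ)]

lemma jb_zero (α : ℂ) : jbracket α 0 = 1 := by simp [jbracket]

lemma jb_rec (α : ℂ) (t : ℕ) :
    4 * ((t : ℂ) + 1) * jbracket α (t + 1) = (4 * α ^ 2 - (2 * t + 1) ^ 2) * jbracket α t := by
  have h1 : (1:ℕ) ≤ t + 1 := Nat.succ_le_succ (Nat.zero_le t)
  rw [jbracket, jbracket, Finset.prod_Icc_succ_top h1, Nat.factorial_succ]
  have h2 : ((2:ℂ) ^ (2 * t)) ≠ 0 := pow_ne_zero _ two_ne_zero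
  have h3 : ((t.factorial : ℂ)) ≠ 0 := Nat.cast_ne_zero.mpr t.factorial_ne_zero
  have h4 : ((t:ℂ) + 1) ≠ 0 := by
    have : ((t+1 : ℕ) : ℂ) ≠ 0 := Nat.cast_ne_zero.mpr (Nat.succ_ne_zero t)
    push_cast at this; exact this
  push_cast
  rw [pow_succ, pow_succ]
  field_simp
  ring

noncomputable def Cs (α : ℂ) (n : ℕ) : ℂ :=
  ∑ t ∈ Finset.range (n+1), (-1)^t * jbracket α t * jbracket α (n-t)

noncomputable def Xs (α : ℂ) (n : ℕ) : ℂ :=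
  ∑ t ∈ Finset.range (n+1), (-1)^t * (t:ℂ) * jbracket α t * jbracket α (n-t)

noncomputable def Qs (α : ℂ) (n : ℕ) : ℂ :=
  ∑ t ∈ Finset.range (n+1), (-1)^t * (4*α^2 - (2*(t:ℂ)+1)^2) * jbracket α t * jbracket α (n-t)

lemma neg_one_pow_sub {j m : ℕ} (h : j ≤ m) : (-1:ℂ)^(m-j) = (-1)^m * (-1)^j := by
  have h1 : (-1:ℂ)^(m-j) * (-1)^j = (-1)^m := by rw [← pow_add]; congr 1; omega
  have hsq : ((-1:ℂ)^j) * ((-1:ℂ)^j) = 1 := by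
    rw [← pow_add, ← two_mul, pow_mul]; norm_num
  linear_combination ((-1:ℂ)^j) * h1 - ((-1:ℂ)^(m-j)) * hsq

lemma Cs_odd (α : ℂ) {n : ℕ} (hn : Odd n) : Cs α n = 0 := by
  have h : Cs α n = -Cs α n := by
    conv_lhs => rw [Cs, ← Finset.sum_range_reflect]
    rw [Cs, ← Finset.sum_neg_distrib]
    apply Finset.sum_congr rfl
    intro j hj
    have hj' : j ≤ n := by simp [Finset.mem_range] at hj; omega
    have e1 : n + 1 - 1 - j = n - j := by omega
    have e2 : n - (n - j) = j := by omega
    rw [e1, e2, neg_one_pow_sub hj', Odd.neg_one_pow hn]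
    ring
  linear_combination h / 2

lemma Xs_even (α : ℂ) {n : ℕ} (hn : Even n) : 2 * Xs α n = n * Cs α n := by
  have h : Xs α n = ∑ t ∈ Finset.range (n+1),
      (-1)^t * ((n:ℂ) - (t:ℂ)) * jbracket α t * jbracket α (n-t) := by
    conv_lhs => rw [Xs, ← Finset.sum_range_reflect]
    apply Finset.sum_congr rfl
    intro j hj
    have hj' : j ≤ n := by simp [Finset.mem_range] at hj; omega
    have e1 : n + 1 - 1 - j = n - j := by omega
    have e2 : n - (n - j) = j := by omega
    have e3 : ((n - j : ℕ) : ℂ) = (n:ℂ) - (j:ℂ) := by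
      rw [Nat.cast_sub hj']
    rw [e1, e2, neg_one_pow_sub hj', Even.neg_one_pow hn, e3]
    ring
  rw [two_mul]
  nth_rewrite 2 [h]
  rw [Xs, Cs, ← Finset.sum_add_distrib, Finset.mul_sum]
  apply Finset.sum_congr rfl
  intro j hj
  ring

lemma X_succ (α : ℂ) (n : ℕ) : 4 * Xs α (n+1) = - Qs α n := by
  rw [Xs, Finset.sum_range_succ']
  push_cast
  rw [Qs, ← Finset.sum_neg_distrib]
  have h0 : ((-1:ℂ))^0 * (0:ℂ) * jbracket α 0 * jbracket α (n+1) = 0 := by ring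
  rw [h0, add_zero, Finset.mul_sum]
  apply Finset.sum_congr rfl
  intro j hj
  have hrec := jb_rec α j
  rw [pow_succ]
  linear_combination (-(-1:ℂ)^j * jbracket α (n-j)) * hrec

lemma Q_odd (α : ℂ) {n : ℕ} (hn : Odd n) : Qs α n = -(4*((n:ℂ)+1)) * Xs α n := by
  have h : Qs α n = ∑ t ∈ Finset.range (n+1),
      (-(-1:ℂ)^t * (4*α^2 - (2*((n:ℂ)-(t:ℂ))+1)^2) * jbracket α t * jbracket α (n-t)) := by
    conv_lhs => rw [Qs, ← Finset.sum_range_reflect]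
    apply Finset.sum_congr rfl
    intro j hj
    have hj' : j ≤ n := by simp [Finset.mem_range] at hj; omega
    have e1 : n + 1 - 1 - j = n - j := by omega
    have e2 : n - (n - j) = j := by omega
    have e3 : ((n - j : ℕ) : ℂ) = (n:ℂ) - (j:ℂ) := Nat.cast_sub hj'
    rw [e1, e2, neg_one_pow_sub hj', Odd.neg_one_pow hn, e3]
    ring
  have h2 : 2 * Qs α n = 4*((n:ℂ)+1) * ((n:ℂ) * Cs α n - 2 * Xs α n) := by
    rw [two_mul]
    nth_rewrite 2 [h]
    nth_rewrite 1 [Qs]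
    rw [← Finset.sum_add_distrib, Cs, Xs, Finset.mul_sum, Finset.mul_sum, ← Finset.sum_sub_distrib,
      Finset.mul_sum]
    apply Finset.sum_congr rfl
    intro j hj
    ring
  rw [Cs_odd α hn] at h2
  linear_combination h2 / 2

lemma keyCX (α : ℂ) {m : ℕ} (h1 : 1 ≤ m) (hm : Even m) : Cs α m = 2 * Xs α (m-1) := by
  have hn : Odd (m-1) := by
    rcases hm with ⟨k, hk⟩
    refine ⟨k-1, by omega⟩
  have hA : 4 * Xs α m = - Qs α (m-1) := by
    have := X_succ α (m-1)
    rwa [show m - 1 + 1 = m by omega] at this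
  have hB := Q_odd α hn
  have hC := Xs_even α hm
  have hcast : ((m-1 : ℕ) : ℂ) + 1 = (m : ℂ) := by
    rw [Nat.cast_sub h1]; ring
  rw [hB, hcast] at hA
  have hm0 : (m:ℂ) ≠ 0 := Nat.cast_ne_zero.mpr (by omega)
  have hA' : Xs α m = (m:ℂ) * Xs α (m-1) := by linear_combination hA / 4
  rw [hA'] at hC
  have h5 : (m:ℂ) * (2 * Xs α (m-1)) = (m:ℂ) * Cs α m := by linear_combination hC
  exact (mul_left_cancel₀ hm0 h5).symm

noncomputable def vv (α : ℂ) (j : ℕ) : ℂ := ((j:ℂ) - 1/2) * jbracket α (j-1)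

noncomputable def uu (α : ℂ) (j : ℕ) : ℂ := jbracket α j + vv α j

lemma uu_eq (α : ℂ) {j : ℕ} (hj : 1 ≤ j) :
    uu α j = jbracket α (j-1) * ((α^2 + (j:ℂ)/2 - 1/4) / (j:ℂ)) := by
  have hrec := jb_rec α (j-1)
  have hc : ((j-1 : ℕ) : ℂ) = (j:ℂ) - 1 := by rw [Nat.cast_sub hj, Nat.cast_one]
  rw [hc, show j - 1 + 1 = j by omega] at hrec
  have hj0 : (j:ℂ) ≠ 0 := Nat.cast_ne_zero.mpr (by omega)
  rw [uu, vv]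
  field_simp
  linear_combination 2 * hrec

lemma sum_Icc_reflect {M : Type*} [AddCommMonoid M] (m : ℕ) (f : ℕ → M) :
    ∑ j ∈ Finset.Icc 1 (m-1), f j = ∑ j ∈ Finset.Icc 1 (m-1), f (m - j) := by
  apply Finset.sum_bij' (fun j _ => m - j) (fun j _ => m - j)
  · intro a ha; simp only [Finset.mem_Icc] at ha ⊢; omega
  · intro a ha; simp only [Finset.mem_Icc] at ha ⊢; omega
  · intro a ha; simp only [Finset.mem_Icc] at ha; omega
  · intro a ha; simp only [Finset.mem_Icc] at ha; omega
  · intro a ha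
    have h2 : m - (m - a) = a := by simp only [Finset.mem_Icc] at ha; omega
    rw [h2]

lemma Icc_to_range (m : ℕ) (f : ℕ → ℂ) :
    ∑ j ∈ Finset.Icc 1 (m-1), f j = ∑ t ∈ Finset.range (m-1), f (t+1) := by
  have e : Finset.Icc 1 (m-1) = Finset.Ico 1 m := by
    ext x; simp only [Finset.mem_Icc, Finset.mem_Ico]; omega
  rw [e, Finset.sum_Ico_eq_sum_range]
  apply Finset.sum_congr (by congr 1) (fun t _ => by rw [add_comm])

noncomputable def Vs (α : ℂ) (n : ℕ) : ℂ :=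
  ∑ t ∈ Finset.range (n+1), (-1)^t * (((n-t : ℕ):ℂ) + 1/2) * jbracket α t * jbracket α (n-t)

lemma Vs_odd (α : ℂ) {n : ℕ} (hn : Odd n) : Vs α n = - Xs α n := by
  have h : Vs α n = ∑ t ∈ Finset.range (n+1),
      (-((-1:ℂ)^t * ((t:ℂ) + 1/2) * jbracket α (n-t) * jbracket α t)) := by
    conv_lhs => rw [Vs, ← Finset.sum_range_reflect]
    apply Finset.sum_congr rfl
    intro j hj
    have hj' : j ≤ n := by simp [Finset.mem_range] at hj; omega
    have e1 : n + 1 - 1 - j = n - j := by omega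
    have e2 : n - (n - j) = j := by omega
    rw [e1, e2, neg_one_pow_sub hj', Odd.neg_one_pow hn]
    ring
  have h2 : Vs α n + (Xs α n + Cs α n / 2) = 0 := by
    rw [h, Xs, Cs, Finset.sum_div, ← Finset.sum_add_distrib, ← Finset.sum_add_distrib]
    apply Finset.sum_eq_zero
    intro j hj
    ring
  have h3 := Cs_odd α hn
  linear_combination h2 - h3 / 2

lemma key01 (α : ℂ) (m : ℕ) :
    ∑ j ∈ Finset.Icc 1 (m-1), ((-1:ℂ)^j * uu α j * vv α (m-j) + vv α j * uu α (m-j))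
      = ∑ j ∈ Finset.Icc 1 (m-1), (if Even j then 2 * uu α j * vv α (m-j) else 0) := by
  have h2 : ∑ j ∈ Finset.Icc 1 (m-1), vv α j * uu α (m-j)
      = ∑ j ∈ Finset.Icc 1 (m-1), uu α j * vv α (m-j) := by
    rw [sum_Icc_reflect m (fun j => vv α j * uu α (m-j))]
    apply Finset.sum_congr rfl
    intro j hj
    have e : m - (m - j) = j := by simp only [Finset.mem_Icc] at hj; omega
    rw [e, mul_comm]
  rw [Finset.sum_add_distrib, h2, ← Finset.sum_add_distrib]
  apply Finset.sum_congr rfl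
  intro j hj
  rcases Nat.even_or_odd j with h | h
  · rw [if_pos h, Even.neg_one_pow h]; ring
  · rw [if_neg (Nat.not_even_iff_odd.mpr h), Odd.neg_one_pow h]; ring

lemma S1_even (α : ℂ) {m : ℕ} (hm : 1 ≤ m) (hme : Even m) :
    ∑ j ∈ Finset.Icc 1 (m-1), (-1:ℂ)^j * jbracket α j * jbracket α (m-j)
      = Cs α m - 2 * jbracket α m := by
  obtain ⟨n, rfl⟩ : ∃ n, m = n + 1 := ⟨m - 1, by omega⟩
  rw [Icc_to_range, Cs, Finset.sum_range_succ, Finset.sum_range_succ']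
  simp only [Nat.add_sub_cancel, Nat.sub_self, Nat.sub_zero, pow_zero, jb_zero, one_mul, mul_one,
    Even.neg_one_pow hme]
  ring

lemma S2_even (α : ℂ) {m : ℕ} (hm : 1 ≤ m) :
    ∑ j ∈ Finset.Icc 1 (m-1), (-1:ℂ)^j * jbracket α j * vv α (m-j)
      = Vs α (m-1) - (((m-1 : ℕ):ℂ) + 1/2) * jbracket α (m-1) := by
  obtain ⟨n, rfl⟩ : ∃ n, m = n + 1 := ⟨m - 1, by omega⟩
  rw [Icc_to_range, Vs]
  simp only [Nat.add_sub_cancel]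
  rw [Finset.sum_range_succ']
  simp only [Nat.sub_zero, pow_zero, jb_zero, one_mul, mul_one]
  have e : ∀ t ∈ Finset.range n, (-1:ℂ)^(t+1) * jbracket α (t+1) * vv α (n + 1 - (t+1))
      = (-1:ℂ)^(t+1) * (((n-(t+1) : ℕ):ℂ)+1/2) * jbracket α (t+1) * jbracket α (n-(t+1)) := by
    intro t ht
    simp only [Finset.mem_range] at ht
    have e3 : n + 1 - (t+1) = n - t := by omega
    have e4 : n - (t+1) = n - t - 1 := by omega
    have e5 : ((n - t - 1 : ℕ):ℂ) = ((n - t : ℕ):ℂ) - 1 := by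
      have h7 : n - t = (n - t - 1) + 1 := by omega
      rw [h7]; push_cast; ring
    rw [e3, vv, e4, e5]
    ring
  rw [Finset.sum_congr rfl e]
  ring

lemma key11 (α : ℂ) {m : ℕ} (hm : 1 ≤ m) :
    ∑ j ∈ Finset.Icc 1 (m-1), (uu α j * uu α (m-j) + (-1:ℂ)^j * vv α j * vv α (m-j))
      = (if Even m then 2 * uu α m else 0)
        + ∑ j ∈ Finset.Icc 1 (m-1), (if Even j then 2 * uu α j * uu α (m-j) else 0) := by
  -- rewrite ite sum as (1 + (-1)^j)-weighted sum
  have hite : ∑ j ∈ Finset.Icc 1 (m-1), (if Even j then 2 * uu α j * uu α (m-j) else 0)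
      = ∑ j ∈ Finset.Icc 1 (m-1), (1 + (-1:ℂ)^j) * (uu α j * uu α (m-j)) := by
    apply Finset.sum_congr rfl
    intro j hj
    rcases Nat.even_or_odd j with h | h
    · rw [if_pos h, Even.neg_one_pow h]; ring
    · rw [if_neg (Nat.not_even_iff_odd.mpr h), Odd.neg_one_pow h]; ring
  rw [hite]
  -- reduce to : ∑ (-1)^j (vv vv - uu uu) = ite m
  rw [← sub_eq_iff_eq_add, ← Finset.sum_sub_distrib]
  have hstep : ∀ j ∈ Finset.Icc 1 (m-1),
      (uu α j * uu α (m-j) + (-1:ℂ)^j * vv α j * vv α (m-j))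
        - (1 + (-1:ℂ)^j) * (uu α j * uu α (m-j))
      = -((-1:ℂ)^j * jbracket α j * jbracket α (m-j)
          + (-1:ℂ)^j * jbracket α j * vv α (m-j)
          + (-1:ℂ)^j * vv α j * jbracket α (m-j)) := by
    intro j hj
    simp only [uu]
    ring
  rw [Finset.sum_congr rfl hstep]
  -- name the three sums
  set S1 := ∑ j ∈ Finset.Icc 1 (m-1), (-1:ℂ)^j * jbracket α j * jbracket α (m-j) with hS1
  set S2 := ∑ j ∈ Finset.Icc 1 (m-1), (-1:ℂ)^j * jbracket α j * vv α (m-j) with hS2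
  have hsplit : ∑ j ∈ Finset.Icc 1 (m-1),
      -((-1:ℂ)^j * jbracket α j * jbracket α (m-j)
        + (-1:ℂ)^j * jbracket α j * vv α (m-j)
        + (-1:ℂ)^j * vv α j * jbracket α (m-j))
      = -(S1 + S2 + ∑ j ∈ Finset.Icc 1 (m-1), (-1:ℂ)^j * vv α j * jbracket α (m-j)) := by
    rw [hS1, hS2, ← Finset.sum_add_distrib, ← Finset.sum_add_distrib, ← Finset.sum_neg_distrib]
  rw [hsplit]
  -- reflect the third sum
  have hT : ∑ j ∈ Finset.Icc 1 (m-1), (-1:ℂ)^j * vv α j * jbracket α (m-j)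
      = (-1:ℂ)^m * S2 := by
    rw [sum_Icc_reflect m (fun j => (-1:ℂ)^j * vv α j * jbracket α (m-j)), hS2, Finset.mul_sum]
    apply Finset.sum_congr rfl
    intro j hj
    simp only [Finset.mem_Icc] at hj
    have e : m - (m - j) = j := by omega
    rw [e, neg_one_pow_sub (by omega : j ≤ m)]
    ring
  rw [hT]
  rcases Nat.even_or_odd m with hme | hmo
  · -- even case
    rw [if_pos hme, Even.neg_one_pow hme]
    have hm1 : 1 ≤ m := by rcases hme with ⟨k,hk⟩; omega
    have hodd : Odd (m-1) := by rcases hme with ⟨k, hk⟩; exact ⟨k - 1, by omega⟩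
    rw [hS1, hS2, S1_even α hm hme, S2_even α hm, Vs_odd α hodd, keyCX α hm hme]
    have hucast : uu α m = jbracket α m + (((m-1:ℕ):ℂ) + 1/2) * jbracket α (m-1) := by
      rw [uu, vv]
      congr 2
      rw [Nat.cast_sub hm, Nat.cast_one]
      ring
    rw [hucast]
    ring
  · -- odd case
    rw [if_neg (Nat.not_even_iff_odd.mpr hmo), Odd.neg_one_pow hmo]
    have hS10 : S1 = 0 := by
      have h : S1 = -S1 := by
        conv_lhs => rw [hS1, sum_Icc_reflect m (fun j => (-1:ℂ)^j * jbracket α j * jbracket α (m-j))]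
        rw [hS1, ← Finset.sum_neg_distrib]
        apply Finset.sum_congr rfl
        intro j hj
        simp only [Finset.mem_Icc] at hj
        have e : m - (m - j) = j := by omega
        rw [e, neg_one_pow_sub (by omega : j ≤ m), Odd.neg_one_pow hmo]
        ring
      linear_combination h / 2
    rw [hS10]
    ring

set_option maxHeartbeats 1000000 in
lemma Amul_smul (α : ℂ) {j k : ℕ} (hj : 1 ≤ j) (hk : 1 ≤ k) :
    (jbracket α (j-1) * jbracket α (k-1)) • (Amat α j * Amat α k)
      = !![(-1:ℂ)^(j+k) * uu α j * uu α k + (-1)^k * vv α j * vv α k,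
           -Complex.I * ((-1)^j * uu α j * vv α k + vv α j * uu α k);
           Complex.I * (-1)^k * ((-1)^j * vv α j * uu α k + uu α j * vv α k),
           (-1)^j * vv α j * vv α k + uu α j * uu α k] := by
  have hj0 : (j:ℂ) ≠ 0 := Nat.cast_ne_zero.mpr (by omega)
  have hk0 : (k:ℂ) ≠ 0 := Nat.cast_ne_zero.mpr (by omega)
  have huj := uu_eq α hj
  have huk := uu_eq α hk
  have hvj : vv α j = ((j:ℂ) - 1/2) * jbracket α (j-1) := rfl
  have hvk : vv α k = ((k:ℂ) - 1/2) * jbracket α (k-1) := rfl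
  ext a b
  have hIs := Complex.I_sq
  fin_cases a <;> fin_cases b <;>
    simp only [Amat, Matrix.smul_apply, Matrix.mul_apply, Fin.sum_univ_two,
      Matrix.cons_val', Matrix.cons_val_zero, Matrix.cons_val_one, Matrix.head_cons,
      Matrix.head_fin_const, Matrix.empty_val', Matrix.cons_val_fin_one, Matrix.head_val',
      Matrix.of_apply, smul_eq_mul, Fin.isValue, Fin.mk_zero, Fin.mk_one] <;>
    rw [huj, huk, hvj, hvk]
  · rw [pow_add]
    linear_combination (-(-1:ℂ)^k * (((j:ℂ)-1/2) * jbracket α (j-1)) * (((k:ℂ)-1/2) * jbracket α (k-1))) * hIs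
  · ring
  · ring
  · linear_combination (-(-1:ℂ)^j * (((j:ℂ)-1/2) * jbracket α (j-1)) * (((k:ℂ)-1/2) * jbracket α (k-1))) * hIs


lemma sum_fin22 (s : Finset ℕ) (f g h k : ℕ → ℂ) :
    ∑ j ∈ s, !![f j, g j; h j, k j]
      = !![∑ j ∈ s, f j, ∑ j ∈ s, g j; ∑ j ∈ s, h j, ∑ j ∈ s, k j] := by
  ext a b
  rw [Matrix.sum_apply]
  fin_cases a <;> fin_cases b <;> simp

set_option maxHeartbeats 1000000 in
lemma matkey (α : ℂ) {m : ℕ} (hm : 1 ≤ m) :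
    (∑ j ∈ Finset.Icc 1 (m-1), (jbracket α (j-1) * jbracket α (m-j-1)) • (Amat α j * Amat α (m-j)))
      = (if Even m then 2 * uu α m else 0) • (1 : Matrix (Fin 2) (Fin 2) ℂ)
        + ∑ j ∈ Finset.Icc 1 (m-1),
            ((if Even j then 2 * uu α j else 0) * jbracket α (m-j-1)) • Amat α (m-j) := by
  have hL : ∀ j ∈ Finset.Icc 1 (m-1),
      (jbracket α (j-1) * jbracket α (m-j-1)) • (Amat α j * Amat α (m-j))
      = !![(-1:ℂ)^m * uu α j * uu α (m-j) + ((-1)^m * (-1)^j) * vv α j * vv α (m-j),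
           -Complex.I * ((-1)^j * uu α j * vv α (m-j) + vv α j * uu α (m-j));
           Complex.I * ((-1)^m * (-1)^j) * ((-1)^j * vv α j * uu α (m-j) + uu α j * vv α (m-j)),
           (-1)^j * vv α j * vv α (m-j) + uu α j * uu α (m-j)] := by
    intro j hj
    simp only [Finset.mem_Icc] at hj
    have h1 : 1 ≤ j := hj.1
    have h2 : 1 ≤ m - j := by omega
    have e2 : (-1:ℂ)^(j + (m-j)) = (-1)^m := by congr 1; omega
    have e3 : (-1:ℂ)^(m-j) = (-1)^m * (-1)^j := neg_one_pow_sub (by omega)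
    rw [Amul_smul α h1 h2, e2, e3]
  rw [Finset.sum_congr rfl hL]
  have hR : ∀ j ∈ Finset.Icc 1 (m-1),
      ((if Even j then 2 * uu α j else 0) * jbracket α (m-j-1)) • Amat α (m-j)
      = !![(-1:ℂ)^m * (if Even j then 2 * uu α j * uu α (m-j) else 0),
           -Complex.I * (if Even j then 2 * uu α j * vv α (m-j) else 0);
           Complex.I * (-1)^m * (if Even j then 2 * uu α j * vv α (m-j) else 0),
           (if Even j then 2 * uu α j * uu α (m-j) else 0)] := by
    intro j hj
    simp only [Finset.mem_Icc] at hj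
    have h2 : 1 ≤ m - j := by omega
    have hn0 : ((m - j : ℕ):ℂ) ≠ 0 := Nat.cast_ne_zero.mpr (by omega)
    have hu := uu_eq α h2
    have hv : vv α (m-j) = (((m-j:ℕ):ℂ) - 1/2) * jbracket α (m-j-1) := rfl
    have e3 : (-1:ℂ)^(m-j) = (-1)^m * (-1)^j := neg_one_pow_sub (by omega)
    rcases Nat.even_or_odd j with h | h
    · simp only [if_pos h]
      ext a b
      fin_cases a <;> fin_cases b <;>
        simp only [Amat, Matrix.smul_apply, Matrix.cons_val', Matrix.cons_val_zero,
          Matrix.cons_val_one, Matrix.head_cons, Matrix.empty_val', Matrix.cons_val_fin_one,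
          Matrix.head_val', Matrix.of_apply, smul_eq_mul, Fin.isValue, Fin.mk_zero, Fin.mk_one,
          Matrix.vecHead, Matrix.vecTail] <;>
        simp only [hu, hv, e3, Even.neg_one_pow h] <;> ring
    · simp only [if_neg (Nat.not_even_iff_odd.mpr h)]
      ext a b
      fin_cases a <;> fin_cases b <;>
        simp
  rw [Finset.sum_congr rfl hR, sum_fin22, sum_fin22]
  have hk01 := key01 α m
  have hk11 := key11 α hm
  ext a b
  fin_cases a <;> fin_cases b <;> simp only [Matrix.add_apply, Matrix.smul_apply,
    Matrix.one_apply, smul_eq_mul, Matrix.cons_val', Matrix.cons_val_zero, Matrix.cons_val_one,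
    Matrix.head_cons, Matrix.empty_val', Matrix.cons_val_fin_one, Matrix.head_val',
    Matrix.of_apply, Fin.isValue, Fin.mk_zero, Fin.mk_one, Matrix.vecHead, Matrix.vecTail]
  · -- (0,0)
    have c1 : ∑ j ∈ Finset.Icc 1 (m-1),
        ((-1:ℂ)^m * uu α j * uu α (m-j) + ((-1:ℂ)^m * (-1)^j) * vv α j * vv α (m-j))
        = (-1:ℂ)^m * ∑ j ∈ Finset.Icc 1 (m-1),
            (uu α j * uu α (m-j) + (-1:ℂ)^j * vv α j * vv α (m-j)) := by
      rw [Finset.mul_sum]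
      exact Finset.sum_congr rfl (fun j _ => by ring)
    have c2 : ∑ j ∈ Finset.Icc 1 (m-1), ((-1:ℂ)^m * if Even j then 2 * uu α j * uu α (m-j) else 0)
        = (-1:ℂ)^m * ∑ j ∈ Finset.Icc 1 (m-1), (if Even j then 2 * uu α j * uu α (m-j) else 0) :=
      (Finset.mul_sum _ _ _).symm
    rw [c1, hk11, c2, mul_add]
    have c3 : (-1:ℂ)^m * (if Even m then 2 * uu α m else 0) = (if Even m then 2 * uu α m else 0) := by
      rcases Nat.even_or_odd m with h | h
      · rw [Even.neg_one_pow h]; ring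
      · rw [if_neg (Nat.not_even_iff_odd.mpr h)]; ring
    rw [c3]
    simp
  · -- (0,1)
    have c1 : ∑ j ∈ Finset.Icc 1 (m-1),
        (-Complex.I * ((-1:ℂ)^j * uu α j * vv α (m-j) + vv α j * uu α (m-j)))
        = -Complex.I * ∑ j ∈ Finset.Icc 1 (m-1),
            ((-1:ℂ)^j * uu α j * vv α (m-j) + vv α j * uu α (m-j)) :=
      (Finset.mul_sum _ _ _).symm
    have c2 : ∑ j ∈ Finset.Icc 1 (m-1),
        (-Complex.I * if Even j then 2 * uu α j * vv α (m-j) else 0)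
        = -Complex.I * ∑ j ∈ Finset.Icc 1 (m-1), (if Even j then 2 * uu α j * vv α (m-j) else 0) :=
      (Finset.mul_sum _ _ _).symm
    rw [c1, hk01, c2]
    simp
  · -- (1,0)
    have c1 : ∑ j ∈ Finset.Icc 1 (m-1),
        (Complex.I * ((-1:ℂ)^m * (-1)^j) * ((-1:ℂ)^j * vv α j * uu α (m-j) + uu α j * vv α (m-j)))
        = (Complex.I * (-1:ℂ)^m) * ∑ j ∈ Finset.Icc 1 (m-1),
            ((-1:ℂ)^j * uu α j * vv α (m-j) + vv α j * uu α (m-j)) := by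
      rw [Finset.mul_sum]
      refine Finset.sum_congr rfl (fun j _ => ?_)
      rcases Nat.even_or_odd j with h | h
      · rw [Even.neg_one_pow h]; ring
      · rw [Odd.neg_one_pow h]; ring
    have c2 : ∑ j ∈ Finset.Icc 1 (m-1),
        (Complex.I * (-1:ℂ)^m * if Even j then 2 * uu α j * vv α (m-j) else 0)
        = (Complex.I * (-1:ℂ)^m) * ∑ j ∈ Finset.Icc 1 (m-1),
            (if Even j then 2 * uu α j * vv α (m-j) else 0) :=
      (Finset.mul_sum _ _ _).symm
    rw [c1, hk01, c2]
    simp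
  · -- (1,1)
    have c1 : ∑ j ∈ Finset.Icc 1 (m-1),
        ((-1:ℂ)^j * vv α j * vv α (m-j) + uu α j * uu α (m-j))
        = ∑ j ∈ Finset.Icc 1 (m-1),
            (uu α j * uu α (m-j) + (-1:ℂ)^j * vv α j * vv α (m-j)) :=
      Finset.sum_congr rfl (fun j _ => by ring)
    rw [c1, hk11]
    simp

/-- with `Δ_k = ((α,k-1)/(2L)^k) • P A_k P⁻¹` and `s` defined by the recursion
`s m = Δ m - ∑_{j=1}^{m-1} s j Δ (m-j)`, one has `s m = Δ m` for odd `m`, and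
`s m = Δ m - ((4α²+2m-1)/L^m)·((α,m-1)/(2^{m+1} m)) • I` for even `m`. -/
theorem s_eq_Delta_simplification (α L : ℂ) (hL : L ≠ 0)
    (P : Matrix (Fin 2) (Fin 2) ℂ) (hP : IsUnit P)
    (Δ s : ℕ → Matrix (Fin 2) (Fin 2) ℂ)
    (hΔ : ∀ k, 1 ≤ k → Δ k = (jbracket α (k - 1) / (2 * L) ^ k) • (P * Amat α k * P⁻¹))
    (hs : ∀ m, 1 ≤ m → s m = Δ m - ∑ j ∈ Finset.Icc 1 (m - 1), s j * Δ (m - j)) :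
    ∀ m, 1 ≤ m →
      (Odd m → s m = Δ m) ∧
      (Even m → s m = Δ m -
        (((4 * α ^ 2 + 2 * (m : ℂ) - 1) / L ^ m) * (jbracket α (m - 1) / (2 ^ (m + 1) * (m : ℂ))))
          • (1 : Matrix (Fin 2) (Fin 2) ℂ)) := by
  have hdetu := (Matrix.isUnit_iff_isUnit_det P).mp hP
  have hPP : P * P⁻¹ = 1 := Matrix.mul_nonsing_inv P hdetu
  have hPP' : P⁻¹ * P = 1 := Matrix.nonsing_inv_mul P hdetu
  have h2L : (2 * L) ≠ 0 := mul_ne_zero two_ne_zero hL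
  set ee : ℕ → ℂ := fun k => (if Even k then 2 * uu α k else 0) / (2*L)^k with hee
  have hconj : ∀ M N : Matrix (Fin 2) (Fin 2) ℂ,
      (P * M * P⁻¹) * (P * N * P⁻¹) = P * (M * N) * P⁻¹ := by
    intro M N
    calc (P * M * P⁻¹) * (P * N * P⁻¹) = P * M * (P⁻¹ * P) * N * P⁻¹ := by
          simp only [Matrix.mul_assoc]
      _ = P * (M * N) * P⁻¹ := by rw [hPP', Matrix.mul_one]; simp only [Matrix.mul_assoc]
  have main : ∀ m, 1 ≤ m → s m = Δ m - ee m • (1 : Matrix (Fin 2) (Fin 2) ℂ) := by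
    intro m
    induction m using Nat.strong_induction_on with
    | _ m ih =>
      intro hm
      rw [hs m hm]
      congr 1
      have hterm : ∀ j ∈ Finset.Icc 1 (m-1), s j * Δ (m-j)
          = ((2*L)^m)⁻¹ • ((jbracket α (j-1) * jbracket α (m-j-1)) • (P * (Amat α j * Amat α (m-j)) * P⁻¹)
              - ((if Even j then 2*uu α j else 0) * jbracket α (m-j-1)) • (P * Amat α (m-j) * P⁻¹)) := by
        intro j hj
        simp only [Finset.mem_Icc] at hj
        have hj1 : 1 ≤ j := hj.1
        have hjm : j < m := by omega
        have hmj : 1 ≤ m - j := by omega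
        have hpow : (2*L)^j * (2*L)^(m-j) = (2*L)^m := by rw [← pow_add]; congr 1; omega
        rw [ih j hjm hj1, hΔ j hj1, hΔ (m-j) hmj, sub_mul]
        rw [smul_mul_smul_comm, hconj]
        rw [smul_mul_smul_comm, Matrix.one_mul]
        rw [smul_sub, smul_smul, smul_smul]
        congr 2
        · rw [div_mul_div_comm, hpow, div_eq_mul_inv, mul_comm]
        · rw [hee]
          simp only []
          rw [div_mul_div_comm, hpow, div_eq_mul_inv, mul_comm]
      rw [Finset.sum_congr rfl hterm, ← Finset.smul_sum, Finset.sum_sub_distrib]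
      have hAconj : ∀ (w : ℕ → ℂ) (Ms : ℕ → Matrix (Fin 2) (Fin 2) ℂ),
          ∑ j ∈ Finset.Icc 1 (m-1), w j • (P * Ms j * P⁻¹)
            = P * (∑ j ∈ Finset.Icc 1 (m-1), w j • Ms j) * P⁻¹ := by
        intro w Ms
        rw [Finset.mul_sum, Finset.sum_mul]
        exact Finset.sum_congr rfl (fun j _ => by
          rw [Matrix.mul_smul, Matrix.smul_mul])
      rw [hAconj (fun j => jbracket α (j-1) * jbracket α (m-j-1)) (fun j => Amat α j * Amat α (m-j)),
        hAconj (fun j => (if Even j then 2*uu α j else 0) * jbracket α (m-j-1)) (fun j => Amat α (m-j))]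
      rw [← Matrix.sub_mul, ← Matrix.mul_sub]
      have hmk : (∑ j ∈ Finset.Icc 1 (m-1), (jbracket α (j-1) * jbracket α (m-j-1)) • (Amat α j * Amat α (m-j)))
          - (∑ j ∈ Finset.Icc 1 (m-1), ((if Even j then 2 * uu α j else 0) * jbracket α (m-j-1)) • Amat α (m-j))
          = (if Even m then 2 * uu α m else 0) • (1 : Matrix (Fin 2) (Fin 2) ℂ) := by
        rw [matkey α hm]; abel
      rw [hmk, Matrix.mul_smul, Matrix.smul_mul, Matrix.mul_one, hPP, smul_smul, hee]
      simp only []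
      rw [div_eq_mul_inv, mul_comm]
  intro m hm
  constructor
  · intro hodd
    rw [main m hm, hee]
    simp only [if_neg (Nat.not_even_iff_odd.mpr hodd)]
    simp
  · intro heven
    rw [main m hm, hee]
    simp only [if_pos heven]
    congr 1
    have hm0 : (m:ℂ) ≠ 0 := Nat.cast_ne_zero.mpr (by omega)
    have hLm : L^m ≠ 0 := pow_ne_zero _ hL
    have h2m : (2:ℂ)^(m+1) ≠ 0 := pow_ne_zero _ two_ne_zero
    have h2Lm : ((2*L):ℂ)^m ≠ 0 := pow_ne_zero _ h2L
    rw [uu_eq α hm, mul_pow]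
    field_simp
    ring
end

section
/- The function z ↦ (z−1)^{1/2}·(z+1)^{1/2}, where each factor is the principal complex square root, is holomorphic on ℂ ∖ [−1,1]; consequently φ(z) := z + (z−1)^{1/2}(z+1)^{1/2} is holomorphic on ℂ ∖ [−1,1]. (In contrast, the principal branch of (z²−1)^{1/2} has an additional spurious branch cut on the imaginary axis.) -/
open Complex

/-- The real interval `[-1, 1]` embedded in the complex plane. -/
def intervalCC : Set ℂ := Complex.ofReal '' Set.Icc (-1 : ℝ) 1

lemma sqrt_neg_pos_im {a : ℂ} (h : 0 < a.im ∨ (a.im = 0 ∧ a.re < 0)) :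
    a ^ (1/2 : ℂ) = I * (-a) ^ (1/2 : ℂ) := by
  have ha : a ≠ 0 := by
    rintro rfl; rcases h with h | ⟨_, h⟩ <;> simp at h
  have hna : -a ≠ 0 := neg_ne_zero.mpr ha
  have harg : a.arg = (-a).arg + Real.pi := by
    rcases h with h | ⟨h0, hre⟩
    · rw [arg_neg_eq_arg_sub_pi_of_im_pos h]; ring
    · have haneg : a.re < 0 := hre
      have : a.arg = Real.pi := by
        rw [Complex.arg_eq_pi_iff]; exact ⟨hre, h0⟩
      rw [this]
      have : (-a).arg = 0 := by
        rw [Complex.arg_eq_zero_iff]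
        constructor
        · simp [neg_nonneg]; linarith
        · simp [h0]
      rw [this]; ring
  have hlog : Complex.log a = Complex.log (-a) + Real.pi * I := by
    rw [Complex.log, Complex.log, harg]
    simp [norm_neg]
    ring
  rw [cpow_def_of_ne_zero ha, cpow_def_of_ne_zero hna, hlog]
  rw [add_mul, Complex.exp_add]
  have : Complex.exp ((Real.pi : ℂ) * I * (1/2)) = I := by
    rw [show (Real.pi : ℂ) * I * (1/2) = (Real.pi/2 : ℝ) * I by push_cast; ring]
    simp [Complex.exp_mul_I, Real.cos_pi_div_two, Real.sin_pi_div_two]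
  rw [this]; ring

lemma sqrt_neg_neg_im {a : ℂ} (h : a.im < 0) :
    a ^ (1/2 : ℂ) = -I * (-a) ^ (1/2 : ℂ) := by
  have ha : a ≠ 0 := by rintro rfl; simp at h
  have hna : -a ≠ 0 := neg_ne_zero.mpr ha
  have harg : a.arg = (-a).arg - Real.pi := by
    rw [arg_neg_eq_arg_add_pi_of_im_neg h]; ring
  have hlog : Complex.log a = Complex.log (-a) - Real.pi * I := by
    rw [Complex.log, Complex.log, harg]
    simp [norm_neg]
    ring
  rw [cpow_def_of_ne_zero ha, cpow_def_of_ne_zero hna, hlog]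
  rw [sub_mul, Complex.exp_sub]
  have : Complex.exp ((Real.pi : ℂ) * I * (1/2)) = I := by
    rw [show (Real.pi : ℂ) * I * (1/2) = (Real.pi/2 : ℝ) * I by push_cast; ring]
    simp [Complex.exp_mul_I, Real.cos_pi_div_two, Real.sin_pi_div_two]
  rw [this]
  field_simp
  ring_nf
  rw [Complex.I_sq]
  ring

/-- On the left region, the product of square roots equals a product of square
roots with arguments in the slit plane. -/
lemma prod_eq {w : ℂ} (hw : w.re < -1 ∨ w.im ≠ 0) :
    (w - 1) ^ (1/2 : ℂ) * (w + 1) ^ (1/2 : ℂ)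
      = -((1 - w) ^ (1/2 : ℂ) * (-1 - w) ^ (1/2 : ℂ)) := by
  have h1 : -(w - 1) = 1 - w := by ring
  have h2 : -(w + 1) = -1 - w := by ring
  rcases lt_trichotomy w.im 0 with him | him | him
  · have e1 : (w - 1) ^ (1/2 : ℂ) = -I * (1 - w) ^ (1/2 : ℂ) := by
      rw [← h1]; exact sqrt_neg_neg_im (by simpa using him)
    have e2 : (w + 1) ^ (1/2 : ℂ) = -I * (-1 - w) ^ (1/2 : ℂ) := by
      rw [← h2]; exact sqrt_neg_neg_im (by simpa using him)
    rw [e1, e2]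
    ring_nf
    rw [Complex.I_sq]
    ring
  · have hre : w.re < -1 := by
      rcases hw with h | h
      · exact h
      · exact absurd him h
    have e1 : (w - 1) ^ (1/2 : ℂ) = I * (1 - w) ^ (1/2 : ℂ) := by
      rw [← h1]
      exact sqrt_neg_pos_im (Or.inr ⟨by simpa using him,
        by simp only [Complex.sub_re, Complex.one_re]; linarith⟩)
    have e2 : (w + 1) ^ (1/2 : ℂ) = I * (-1 - w) ^ (1/2 : ℂ) := by
      rw [← h2]
      exact sqrt_neg_pos_im (Or.inr ⟨by simpa using him,
        by simp only [Complex.add_re, Complex.one_re]; linarith⟩)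
    rw [e1, e2]
    ring_nf
    rw [Complex.I_sq]
    ring
  · have e1 : (w - 1) ^ (1/2 : ℂ) = I * (1 - w) ^ (1/2 : ℂ) := by
      rw [← h1]; exact sqrt_neg_pos_im (Or.inl (by simpa using him))
    have e2 : (w + 1) ^ (1/2 : ℂ) = I * (-1 - w) ^ (1/2 : ℂ) := by
      rw [← h2]; exact sqrt_neg_pos_im (Or.inl (by simpa using him))
    rw [e1, e2]
    ring_nf
    rw [Complex.I_sq]
    ring

lemma f_differentiableOn :
    DifferentiableOn ℂ
        (fun z : ℂ => (z - 1) ^ (1 / 2 : ℂ) * (z + 1) ^ (1 / 2 : ℂ)) intervalCCᶜ := by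
  intro z hz
  apply DifferentiableAt.differentiableWithinAt
  -- z is not in [-1,1]
  have hz' : z.im ≠ 0 ∨ 1 < z.re ∨ z.re < -1 := by
    by_contra h
    push_neg at h
    obtain ⟨h1, h2, h3⟩ := h
    apply hz
    exact ⟨z.re, ⟨h3, h2⟩, by simp [Complex.ext_iff, h1]⟩
  rcases hz' with him | hre | hre
  · -- both factors in slit plane
    apply DifferentiableAt.mul
    · exact (differentiableAt_id.sub (differentiableAt_const 1)).cpow
        (differentiableAt_const _) (Or.inr (by simpa using him))
    · exact (differentiableAt_id.add (differentiableAt_const 1)).cpow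
        (differentiableAt_const _) (Or.inr (by simpa using him))
  · apply DifferentiableAt.mul
    · exact (differentiableAt_id.sub (differentiableAt_const 1)).cpow
        (differentiableAt_const _) (Or.inl (by simp; linarith))
    · exact (differentiableAt_id.add (differentiableAt_const 1)).cpow
        (differentiableAt_const _) (Or.inl (by simp; linarith))
  · -- use the alternate representation on the open set U2
    set U2 : Set ℂ := {w : ℂ | w.re < -1 ∨ w.im ≠ 0} with hU2
    have hopen : IsOpen U2 := by
      have : U2 = (Complex.re ⁻¹' Set.Iio (-1)) ∪ (Complex.im ⁻¹' {0}ᶜ) := by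
        ext w; simp [hU2]
      rw [this]
      exact (isOpen_Iio.preimage Complex.continuous_re).union
        ((isOpen_compl_singleton).preimage Complex.continuous_im)
    have hzU2 : z ∈ U2 := Or.inl hre
    have hg : DifferentiableAt ℂ
        (fun w : ℂ => -((1 - w) ^ (1/2 : ℂ) * (-1 - w) ^ (1/2 : ℂ))) z := by
      apply DifferentiableAt.neg
      apply DifferentiableAt.mul
      · exact ((differentiableAt_const (1:ℂ)).sub differentiableAt_id).cpow
          (differentiableAt_const _) (Or.inl (by simp; linarith))
      · exact ((differentiableAt_const (-1:ℂ)).sub differentiableAt_id).cpow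
          (differentiableAt_const _) (Or.inl (by simp; linarith))
    have heq : (fun w : ℂ => -((1 - w) ^ (1/2 : ℂ) * (-1 - w) ^ (1/2 : ℂ)))
        =ᶠ[nhds z] (fun w : ℂ => (w - 1) ^ (1/2 : ℂ) * (w + 1) ^ (1/2 : ℂ)) := by
      filter_upwards [hopen.mem_nhds hzU2] with w hw
      exact (prod_eq hw).symm
    exact hg.congr_of_eventuallyEq heq.symm

/-- `z ↦ (z-1)^{1/2} (z+1)^{1/2}` (principal square roots) is holomorphic on
`ℂ ∖ [-1,1]`, and consequently so is `φ(z) = z + (z-1)^{1/2}(z+1)^{1/2}`. -/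
theorem sqrt_product_holomorphic :
    DifferentiableOn ℂ
        (fun z : ℂ => (z - 1) ^ (1 / 2 : ℂ) * (z + 1) ^ (1 / 2 : ℂ)) intervalCCᶜ ∧
      DifferentiableOn ℂ
        (fun z : ℂ => z + (z - 1) ^ (1 / 2 : ℂ) * (z + 1) ^ (1 / 2 : ℂ)) intervalCCᶜ := by
  refine ⟨f_differentiableOn, ?_⟩
  exact (differentiable_id.differentiableOn).add f_differentiableOn
end

section
/- For every z ∈ ℂ ∖ [−1,1], one has |z + (z−1)^{1/2}(z+1)^{1/2}| > 1, where each square root is the principal complex square root. That is, the function φ(z) = z + (z−1)^{1/2}(z+1)^{1/2} maps ℂ ∖ [−1,1] into the exterior of the closed unit disk. -/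
open Complex Real

lemma abs_sum_gt_two {z : ℂ} (hz : z ∉ intervalCC) :
    2 < ‖z - 1‖ + ‖z + 1‖ := by
  set x := z.re with hx
  have h1 : |x - 1| ≤ ‖z - 1‖ := by
    simpa using Complex.abs_re_le_norm (z - 1)
  have h2 : |x + 1| ≤ ‖z + 1‖ := by
    simpa using Complex.abs_re_le_norm (z + 1)
  by_cases hy : z.im = 0
  · have hzx : z = (x : ℂ) := by apply Complex.ext <;> simp [hy, hx]
    have hxI : x ∉ Set.Icc (-1 : ℝ) 1 := fun hmem => hz ⟨x, hmem, hzx.symm⟩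
    rw [Set.mem_Icc, not_and_or] at hxI
    have : 2 < |x - 1| + |x + 1| := by
      rcases hxI with h | h <;> push_neg at h
      · rw [abs_of_neg (by linarith), abs_of_neg (by linarith)]; linarith
      · rw [abs_of_pos (by linarith), abs_of_pos (by linarith)]; linarith
    linarith
  · have him : 0 < z.im * z.im := mul_self_pos.mpr hy
    have h1' : |x - 1| < ‖z - 1‖ := by
      apply lt_of_pow_lt_pow_left₀ 2 (norm_nonneg _)
      rw [Complex.sq_norm, Complex.normSq_apply]
      simp only [Complex.sub_re, Complex.sub_im, Complex.one_re, Complex.one_im, sub_zero]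
      nlinarith [_root_.sq_abs (x - 1)]
    have h2' : |x + 1| ≤ |x - 1| + 2 := by
      rcases abs_sub_abs_le_abs_sub (x + 1) (x - 1) with h
      have : |x + 1 - (x - 1)| = 2 := by norm_num
      linarith
    have hbase : 2 ≤ |x - 1| + |x + 1| := by
      have := abs_sub_abs_le_abs_sub (x + 1) (x - 1)
      have h2'' : (2:ℝ) = |x + 1 - (x - 1)| := by norm_num
      cases abs_cases (x-1) with
      | inl h => cases abs_cases (x+1) with
        | inl h' => linarith [h.1, h'.1]
        | inr h' => linarith [h.1, h'.1]
      | inr h => cases abs_cases (x+1) with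
        | inl h' => linarith [h.1, h'.1]
        | inr h' => linarith [h.1, h'.1]
    linarith

/-- for `z ∉ [-1,1]`, `|z + (z-1)^{1/2}(z+1)^{1/2}| > 1`:
the conformal map `φ` sends `ℂ ∖ [-1,1]` into the exterior of the closed unit disk. -/
theorem phi_maps_to_exterior_unit_disk (z : ℂ) (hz : z ∉ intervalCC) :
    1 < ‖z + (z - 1) ^ (1 / 2 : ℂ) * (z + 1) ^ (1 / 2 : ℂ)‖ := by
  set u := (z - 1) ^ (1 / 2 : ℂ) with hu
  set v := (z + 1) ^ (1 / 2 : ℂ) with hv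
  have h12 : (1 / 2 : ℂ) = ((2 : ℕ) : ℂ)⁻¹ := by norm_num
  have hu2 : u ^ 2 = z - 1 := by
    rw [hu, h12]; exact Complex.cpow_nat_inv_pow _ two_ne_zero
  have hv2 : v ^ 2 = z + 1 := by
    rw [hv, h12]; exact Complex.cpow_nat_inv_pow _ two_ne_zero
  -- φ = (u+v)^2 / 2
  have hphi : z + u * v = (u + v) ^ 2 / 2 := by
    have : (u + v) ^ 2 = u ^ 2 + v ^ 2 + 2 * (u * v) := by ring
    rw [this, hu2, hv2]; ring
  -- real parts nonneg
  have h12' : (1 / 2 : ℂ) = (2⁻¹ : ℂ) := by norm_num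
  have hure : 0 ≤ u.re := by
    rw [hu, h12', Complex.cpow_inv_two_re]; exact Real.sqrt_nonneg _
  have hvre : 0 ≤ v.re := by
    rw [hv, h12', Complex.cpow_inv_two_re]; exact Real.sqrt_nonneg _
  -- imaginary parts: same sign
  have him : 0 ≤ u.im * v.im := by
    rcases le_or_gt 0 z.im with h | h
    · have h1 : (0:ℝ) ≤ (z - 1).im := by simpa using h
      have h2 : (0:ℝ) ≤ (z + 1).im := by simpa using h
      rw [hu, hv, h12', Complex.cpow_inv_two_im_eq_sqrt h1,
        Complex.cpow_inv_two_im_eq_sqrt h2]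
      positivity
    · have h1 : (z - 1).im < 0 := by simpa using h
      have h2 : (z + 1).im < 0 := by simpa using h
      rw [hu, hv, h12', Complex.cpow_inv_two_im_eq_neg_sqrt h1,
        Complex.cpow_inv_two_im_eq_neg_sqrt h2]
      rw [neg_mul_neg]; positivity
  -- normSq pieces
  have hnu : Complex.normSq u = ‖z - 1‖ := by
    rw [← Complex.sq_norm, ← norm_pow, hu2]
  have hnv : Complex.normSq v = ‖z + 1‖ := by
    rw [← Complex.sq_norm, ← norm_pow, hv2]
  have hrepos : 0 ≤ (u * (starRingEnd ℂ) v).re := by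
    rw [Complex.mul_re]
    simp only [Complex.conj_re, Complex.conj_im, mul_neg]
    nlinarith [mul_nonneg hure hvre]
  have hsum := abs_sum_gt_two hz
  have key : 2 < Complex.normSq (u + v) := by
    rw [Complex.normSq_add, hnu, hnv]
    nlinarith
  rw [hphi]
  rw [norm_div, norm_pow, Complex.sq_norm]
  have : ‖(2 : ℂ)‖ = 2 := by norm_num
  rw [this]
  linarith
end

section
/- Let α, β be real numbers. For real x > 1 define φ(x) := x + √(x²−1), γ(x) := ((x−1)/(x+1))^{1/4}, F(x) := φ(x)^{(α+β)/2}, the 2×2 complex matrices M(x) := (1/2)·[[γ(x)+γ(x)⁻¹, −i(γ(x)−γ(x)⁻¹)], [i(γ(x)−γ(x)⁻¹), γ(x)+γ(x)⁻¹]], F(x)^{σ₃} := [[F(x), 0],[0, F(x)⁻¹]], and A₁ := [[−(α²+1/4), −i/2], [−i/2, α²+1/4]]. Then the limit as x → 1⁺ of ((x−1)/(2·log φ(x))) · M(x)·F(x)^{σ₃}·A₁·F(x)^{−σ₃}·M(x)⁻¹ exists and equals ((4α²−1)/16)·[[−1, i],[i, 1]]. -/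
set_option maxHeartbeats 1000000

open Filter

theorem aux_smul_fin_two {α : Type*} [Mul α] (x a b c d : α) :
    x • !![a, b; c, d] = !![x * a, x * b; x * c, x * d] := by
  ext i j
  fin_cases i <;> fin_cases j <;> simp [Matrix.smul_apply]

theorem aux_add_fin_two {α : Type*} [Add α] (a b c d e f g h : α) :
    !![a, b; c, d] + !![e, f; g, h] = !![a + e, b + f; c + g, d + h] := by
  ext i j
  fin_cases i <;> fin_cases j <;> simp [Matrix.add_apply]

theorem aux_eq_fin_two {α : Type*} {a b c d e f g h : α}
    (h1 : a = e) (h2 : b = f) (h3 : c = g) (h4 : d = h) :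
    !![a, b; c, d] = !![e, f; g, h] := by
  rw [h1, h2, h3, h4]

theorem aux_prod (cα U G Gi Ff Fi : ℂ) (hGi : G * Gi = 1) (hFi : Ff * Fi = 1) :
    (U * G^2) • (((1:ℂ)/2) • !![G + Gi, -Complex.I*(G-Gi); Complex.I*(G-Gi), G+Gi]
      * !![Ff, 0; 0, Fi] * !![-cα, -Complex.I/2; -Complex.I/2, cα]
      * !![Fi, 0; 0, Ff] * (((1:ℂ)/2) • !![G + Gi, Complex.I*(G-Gi); -(Complex.I*(G-Gi)), G+Gi]))
    = (U*(G^4+1)) • !![-(cα/2),0;0,cα/2] + (U*(G^4-1)) • !![0, -(Complex.I*cα/2); -(Complex.I*cα/2),0]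
      + (U*(G^4-1)*Ff^2 + U*(G^4-1)*Fi^2) • !![-(1/8:ℂ),0;0,(1/8:ℂ)]
      + (U*(G^2+1)^2*Ff^2 + U*(G^2-1)^2*Fi^2) • !![0,-(Complex.I/8);0,0]
      + (U*(G^2+1)^2*Fi^2 + U*(G^2-1)^2*Ff^2) • !![0,0;-(Complex.I/8),0] := by
  have hI2 : Complex.I ^ 2 = -1 := Complex.I_sq
  simp only [Matrix.smul_mul, Matrix.mul_smul, smul_smul, Matrix.mul_fin_two,
    aux_smul_fin_two, aux_add_fin_two]
  refine aux_eq_fin_two ?_ ?_ ?_ ?_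
  · linear_combination ((-1/8)*U*G^2*Gi^2*Fi^2 + (1/4)*U*G^2*Gi^2*Ff*Fi*cα + (-1/8)*U*G^2*Gi^2*Ff^2 + (-1/2)*U*G^3*Gi*Ff*Fi*cα + (1/8)*U*G^4*Fi^2 + (1/4)*U*G^4*Ff*Fi*cα + (1/8)*U*G^4*Ff^2) * hI2 + ((1/8)*U*Fi^2 + (-1/2)*U*Ff*Fi*cα + (1/8)*U*Ff^2 + (1/8)*U*G*Gi*Fi^2 + (-1/2)*U*G*Gi*Ff*Fi*cα + (1/8)*U*G*Gi*Ff^2) * hGi + ((-1/2)*U*cα + (-1/2)*U*G^4*cα) * hFi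
  · linear_combination ((1/8)*U*G^2*Gi^2*Fi^2*Complex.I + (-1/4)*U*G^3*Gi*Fi^2*Complex.I + (1/8)*U*G^4*Fi^2*Complex.I) * hI2 + ((-1/8)*U*Fi^2*Complex.I + (1/2)*U*Ff*Fi*cα*Complex.I + (-1/8)*U*Ff^2*Complex.I + (-1/8)*U*G*Gi*Fi^2*Complex.I + (1/2)*U*G*Gi*Ff*Fi*cα*Complex.I + (-1/8)*U*G*Gi*Ff^2*Complex.I + (1/4)*U*G^2*Fi^2*Complex.I + (-1/4)*U*G^2*Ff^2*Complex.I) * hGi + ((1/2)*U*cα*Complex.I + (-1/2)*U*G^4*cα*Complex.I) * hFi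
  · linear_combination ((1/8)*U*G^2*Gi^2*Ff^2*Complex.I + (-1/4)*U*G^3*Gi*Ff^2*Complex.I + (1/8)*U*G^4*Ff^2*Complex.I) * hI2 + ((-1/8)*U*Fi^2*Complex.I + (1/2)*U*Ff*Fi*cα*Complex.I + (-1/8)*U*Ff^2*Complex.I + (-1/8)*U*G*Gi*Fi^2*Complex.I + (1/2)*U*G*Gi*Ff*Fi*cα*Complex.I + (-1/8)*U*G*Gi*Ff^2*Complex.I + (-1/4)*U*G^2*Fi^2*Complex.I + (1/4)*U*G^2*Ff^2*Complex.I) * hGi + ((1/2)*U*cα*Complex.I + (-1/2)*U*G^4*cα*Complex.I) * hFi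
  · linear_combination ((1/8)*U*G^2*Gi^2*Fi^2 + (-1/4)*U*G^2*Gi^2*Ff*Fi*cα + (1/8)*U*G^2*Gi^2*Ff^2 + (1/2)*U*G^3*Gi*Ff*Fi*cα + (-1/8)*U*G^4*Fi^2 + (-1/4)*U*G^4*Ff*Fi*cα + (-1/8)*U*G^4*Ff^2) * hI2 + ((-1/8)*U*Fi^2 + (1/2)*U*Ff*Fi*cα + (-1/8)*U*Ff^2 + (-1/8)*U*G*Gi*Fi^2 + (1/2)*U*G*Gi*Ff*Fi*cα + (-1/8)*U*G*Gi*Ff^2) * hGi + ((1/2)*U*cα + (1/2)*U*G^4*cα) * hFi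

/-- with `φ(x) = x + √(x²-1)`, `γ(x) = ((x-1)/(x+1))^{1/4}`,
`F(x) = φ(x)^{(α+β)/2}`, `M(x)` the global parametrix matrix, `F(x)^{σ₃}` the diagonal matrix
`diag(F(x), F(x)⁻¹)` and `A₁` as given, the limit as `x → 1⁺` of
`((x-1)/(2 log φ(x))) • M(x) F(x)^{σ₃} A₁ F(x)^{-σ₃} M(x)⁻¹` exists and equals
`((4α²-1)/16) • [[-1, i],[i, 1]]`. -/
theorem delta1_residue_limit (α β : ℝ)
    (φ γ F : ℝ → ℝ) (M Fs : ℝ → Matrix (Fin 2) (Fin 2) ℂ) (A1 : Matrix (Fin 2) (Fin 2) ℂ)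
    (hφ : ∀ x : ℝ, φ x = x + Real.sqrt (x ^ 2 - 1))
    (hγ : ∀ x : ℝ, γ x = ((x - 1) / (x + 1)) ^ ((1 : ℝ) / 4))
    (hF : ∀ x : ℝ, F x = φ x ^ ((α + β) / 2))
    (hM : ∀ x : ℝ, M x = ((1 : ℂ) / 2) •
      !![((γ x : ℂ) + (γ x : ℂ)⁻¹), -Complex.I * ((γ x : ℂ) - (γ x : ℂ)⁻¹);
         Complex.I * ((γ x : ℂ) - (γ x : ℂ)⁻¹), ((γ x : ℂ) + (γ x : ℂ)⁻¹)])
    (hFs : ∀ x : ℝ, Fs x = !![(F x : ℂ), 0; 0, (F x : ℂ)⁻¹])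
    (hA1 : A1 = !![-((α : ℂ) ^ 2 + 1 / 4), -Complex.I / 2;
                   -Complex.I / 2, (α : ℂ) ^ 2 + 1 / 4]) :
    Tendsto
      (fun x : ℝ =>
        (((x - 1) / (2 * Real.log (φ x)) : ℝ) : ℂ) •
          (M x * Fs x * A1 * (Fs x)⁻¹ * (M x)⁻¹))
      (nhdsWithin 1 (Set.Ioi 1))
      (nhds ((((4 * (α : ℂ) ^ 2 - 1) / 16)) •
        !![(-1 : ℂ), Complex.I; Complex.I, 1])) := by
  have hI2 : Complex.I ^ 2 = -1 := Complex.I_sq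
  have hI3 : Complex.I ^ 3 = -Complex.I := by
    rw [pow_succ, hI2]; ring
  have hI4 : Complex.I ^ 4 = 1 := by
    rw [pow_succ, hI3, neg_mul, Complex.I_mul_I]; ring
  set l : Filter ℝ := nhdsWithin 1 (Set.Ioi 1) with hldef
  have hev : ∀ᶠ x in l, (1:ℝ) < x := eventually_mem_nhdsWithin
  have hl_le : l ≤ nhds 1 := nhdsWithin_le_nhds
  have hbase : ∀ x : ℝ, 1 < x → 0 < (x-1)/(x+1) := fun x hx =>
    div_pos (by linarith) (by linarith)
  have hγpos : ∀ x : ℝ, 1 < x → 0 < γ x := fun x hx => by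
    rw [hγ]; exact Real.rpow_pos_of_pos (hbase x hx) _
  have hφgt : ∀ x : ℝ, 1 < x → 1 < φ x := fun x hx => by
    rw [hφ]; nlinarith [Real.sqrt_nonneg (x^2-1)]
  have hFpos : ∀ x : ℝ, 1 < x → 0 < F x := fun x hx => by
    rw [hF]; exact Real.rpow_pos_of_pos (lt_trans one_pos (hφgt x hx)) _
  have hγsq : ∀ x : ℝ, 1 < x → γ x ^ 2 = Real.sqrt ((x-1)/(x+1)) := by
    intro x hx
    rw [hγ, ← Real.rpow_natCast (((x-1)/(x+1)) ^ ((1:ℝ)/4)) 2,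
      ← Real.rpow_mul (hbase x hx).le, Real.sqrt_eq_rpow]
    norm_num
  have hkey : ∀ x : ℝ, 1 < x → Real.sqrt (x^2-1) * γ x ^ 2 = x - 1 := by
    intro x hx
    rw [hγsq x hx, ← Real.sqrt_mul (by nlinarith),
      show (x^2-1) * ((x-1)/(x+1)) = (x-1)^2 by field_simp; ring]
    exact Real.sqrt_sq (by linarith)
  -- basic limits
  have hγ0 : Tendsto γ l (nhds 0) := by
    have h1 : Tendsto (fun x : ℝ => (x-1)/(x+1)) l (nhds 0) := by
      have hc : ContinuousAt (fun x : ℝ => (x-1)/(x+1)) 1 :=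
        (continuousAt_id.sub continuousAt_const).div
          (continuousAt_id.add continuousAt_const) (by norm_num)
      have := hc.tendsto.mono_left hl_le
      norm_num at this; exact this
    have h2 : ContinuousAt (fun t : ℝ => t ^ ((1:ℝ)/4)) 0 :=
      Real.continuousAt_rpow_const 0 _ (Or.inr (by norm_num))
    have h3 := h2.tendsto.comp h1
    rw [Real.zero_rpow (by norm_num)] at h3
    exact Tendsto.congr (fun x => (hγ x).symm) h3
  have hφ1 : Tendsto φ l (nhds 1) := by
    have hc : ContinuousAt (fun x : ℝ => x + Real.sqrt (x^2-1)) 1 := by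
      exact continuousAt_id.add (Real.continuous_sqrt.continuousAt.comp
        ((continuousAt_pow 1 2).sub continuousAt_const))
    have := hc.tendsto.mono_left hl_le
    norm_num [Real.sqrt_zero] at this
    exact Tendsto.congr (fun x => (hφ x).symm) this
  have hφ1' : Tendsto φ l (nhdsWithin 1 {(1:ℝ)}ᶜ) := by
    rw [tendsto_nhdsWithin_iff]
    exact ⟨hφ1, hev.mono fun x hx => (ne_of_gt (hφgt x hx))⟩
  have hslope : Tendsto (fun y : ℝ => Real.log y / (y - 1))
      (nhdsWithin 1 {(1:ℝ)}ᶜ) (nhds 1) := by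
    have h := Real.hasDerivAt_log one_ne_zero
    rw [hasDerivAt_iff_tendsto_slope] at h
    rw [inv_one] at h
    refine Tendsto.congr (fun y => ?_) h
    rw [slope_def_field, Real.log_one, sub_zero]
  have hF1 : Tendsto F l (nhds 1) := by
    have h2 : ContinuousAt (fun t : ℝ => t ^ ((α+β)/2)) 1 :=
      Real.continuousAt_rpow_const 1 _ (Or.inl one_ne_zero)
    have h3 := h2.tendsto.comp hφ1
    rw [Real.one_rpow] at h3
    exact Tendsto.congr (fun x => (hF x).symm) h3
  have hsub : Tendsto (fun x : ℝ => Real.sqrt (x-1)/Real.sqrt (x+1)) l (nhds 0) := by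
    have h1 : Tendsto (fun x : ℝ => Real.sqrt (x-1)) l (nhds 0) := by
      have hc : ContinuousAt (fun x : ℝ => Real.sqrt (x-1)) 1 :=
        Real.continuous_sqrt.continuousAt.comp (continuousAt_id.sub continuousAt_const)
      have := hc.tendsto.mono_left hl_le
      norm_num [Real.sqrt_zero] at this; exact this
    have h2 : Tendsto (fun x : ℝ => Real.sqrt (x+1)) l (nhds (Real.sqrt 2)) := by
      have hc : ContinuousAt (fun x : ℝ => Real.sqrt (x+1)) 1 :=
        Real.continuous_sqrt.continuousAt.comp (continuousAt_id.add continuousAt_const)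
      have := hc.tendsto.mono_left hl_le
      norm_num at this; exact this
    have := h1.div h2 (by positivity)
    norm_num at this; exact this
  have hratio : Tendsto (fun x : ℝ => (φ x - 1)/Real.sqrt (x^2-1)) l (nhds 1) := by
    have h0 := hsub.add_const 1
    norm_num at h0
    refine Tendsto.congr' ?_ h0
    filter_upwards [hev] with x hx
    have ha : (0:ℝ) < Real.sqrt (x-1) := Real.sqrt_pos.2 (by linarith)
    have hb : (0:ℝ) < Real.sqrt (x+1) := Real.sqrt_pos.2 (by linarith)
    have hmul : Real.sqrt (x^2-1) = Real.sqrt (x-1) * Real.sqrt (x+1) := by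
      rw [← Real.sqrt_mul (by linarith)]; ring_nf
    have h1 : Real.sqrt (x-1)^2 = x - 1 := Real.sq_sqrt (by linarith)
    rw [hφ x, hmul]
    field_simp
    nlinarith [h1]
  have hlog : Tendsto (fun x : ℝ => Real.log (φ x) / Real.sqrt (x^2-1)) l (nhds 1) := by
    have hcomp : Tendsto (fun x => Real.log (φ x) / (φ x - 1)) l (nhds 1) := hslope.comp hφ1'
    have hmul := hcomp.mul hratio
    norm_num at hmul
    refine Tendsto.congr' ?_ hmul
    filter_upwards [hev] with x hx
    have h1 : φ x - 1 ≠ 0 := ne_of_gt (by linarith [hφgt x hx])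
    have h2 : Real.sqrt (x^2-1) ≠ 0 := ne_of_gt (Real.sqrt_pos.2 (by nlinarith))
    field_simp
  set u : ℝ → ℝ := fun x => (1/2) * (Real.sqrt (x^2-1) / Real.log (φ x)) with hu_def
  have hu : Tendsto u l (nhds (1/2 : ℝ)) := by
    have h := (hlog.inv₀ one_ne_zero).const_mul (1/2 : ℝ)
    simp only [inv_div] at h
    norm_num at h; exact h
  have hlam : ∀ x : ℝ, 1 < x → (x-1)/(2*Real.log (φ x)) = u x * γ x ^ 2 := by
    intro x hx
    have hL : 0 < Real.log (φ x) := Real.log_pos (hφgt x hx)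
    have hr : 0 < Real.sqrt (x^2-1) := Real.sqrt_pos.2 (by nlinarith)
    have hk := hkey x hx
    simp only [hu_def]
    field_simp
    nlinarith [hk]
  -- complex lifts
  have hUt : Tendsto (fun x => ((u x : ℝ) : ℂ)) l (nhds (1/2 : ℂ)) := by
    have := (Complex.continuous_ofReal.tendsto _).comp hu
    norm_num at this; exact this
  have hgt : Tendsto (fun x => ((γ x : ℝ) : ℂ)) l (nhds 0) := by
    have := (Complex.continuous_ofReal.tendsto _).comp hγ0
    simpa [Function.comp_def] using this
  have hft : Tendsto (fun x => ((F x : ℝ) : ℂ)) l (nhds 1) := by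
    have := (Complex.continuous_ofReal.tendsto _).comp hF1
    simpa [Function.comp_def] using this
  have hSt : Tendsto (fun x => ((F x : ℝ) : ℂ) ^ 2) l (nhds 1) := by
    simpa using hft.pow 2
  have hTt : Tendsto (fun x => ((F x : ℝ) : ℂ)⁻¹ ^ 2) l (nhds 1) := by
    have h := (hft.inv₀ one_ne_zero).pow 2
    exact (by norm_num : ((1:ℂ)⁻¹)^2 = 1) ▸ h
  set c : ℂ := (α:ℂ)^2 + 1/4 with hc_def
  set E0 : Matrix (Fin 2) (Fin 2) ℂ := !![-(c/2), 0; 0, c/2] with hE0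
  set EA : Matrix (Fin 2) (Fin 2) ℂ := !![0, -(Complex.I*c/2); -(Complex.I*c/2), 0] with hEA
  set EB : Matrix (Fin 2) (Fin 2) ℂ := !![-(1/8:ℂ), 0; 0, (1/8:ℂ)] with hEB
  set EC : Matrix (Fin 2) (Fin 2) ℂ := !![0, -(Complex.I/8); 0, 0] with hEC
  set ED : Matrix (Fin 2) (Fin 2) ℂ := !![0, 0; -(Complex.I/8), 0] with hED
  have hp : Tendsto (fun x => ((u x:ℝ):ℂ) * (((γ x:ℝ):ℂ)^4 + 1)) l (nhds (1/2 : ℂ)) := by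
    have := hUt.mul ((hgt.pow 4).add_const 1)
    norm_num at this; exact this
  have hq : Tendsto (fun x => ((u x:ℝ):ℂ) * (((γ x:ℝ):ℂ)^4 - 1)) l (nhds (-(1/2) : ℂ)) := by
    have := hUt.mul ((hgt.pow 4).sub_const 1)
    norm_num at this; exact this
  have hqST : Tendsto (fun x => ((u x:ℝ):ℂ) * (((γ x:ℝ):ℂ)^4 - 1) * ((F x:ℝ):ℂ)^2
      + ((u x:ℝ):ℂ) * (((γ x:ℝ):ℂ)^4 - 1) * ((F x:ℝ):ℂ)⁻¹^2) l (nhds (-1 : ℂ)) := by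
    have h := (hq.mul hSt).add (hq.mul hTt)
    convert h using 2
    norm_num
  have hplus : Tendsto (fun x => ((u x:ℝ):ℂ) * (((γ x:ℝ):ℂ)^2 + 1)^2) l (nhds (1/2 : ℂ)) := by
    have := hUt.mul (((hgt.pow 2).add_const 1).pow 2)
    norm_num at this; exact this
  have hminus : Tendsto (fun x => ((u x:ℝ):ℂ) * (((γ x:ℝ):ℂ)^2 - 1)^2) l (nhds (1/2 : ℂ)) := by
    have := hUt.mul (((hgt.pow 2).sub_const 1).pow 2)
    norm_num at this; exact this
  have hrC : Tendsto (fun x => ((u x:ℝ):ℂ) * (((γ x:ℝ):ℂ)^2 + 1)^2 * ((F x:ℝ):ℂ)^2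
      + ((u x:ℝ):ℂ) * (((γ x:ℝ):ℂ)^2 - 1)^2 * ((F x:ℝ):ℂ)⁻¹^2) l (nhds (1 : ℂ)) := by
    have h := (hplus.mul hSt).add (hminus.mul hTt)
    convert h using 2
    norm_num
  have hrD : Tendsto (fun x => ((u x:ℝ):ℂ) * (((γ x:ℝ):ℂ)^2 + 1)^2 * ((F x:ℝ):ℂ)⁻¹^2
      + ((u x:ℝ):ℂ) * (((γ x:ℝ):ℂ)^2 - 1)^2 * ((F x:ℝ):ℂ)^2) l (nhds (1 : ℂ)) := by
    have h := (hplus.mul hTt).add (hminus.mul hSt)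
    convert h using 2
    norm_num
  have hΨ : Tendsto (fun x =>
      (((u x:ℝ):ℂ) * (((γ x:ℝ):ℂ)^4 + 1)) • E0
      + (((u x:ℝ):ℂ) * (((γ x:ℝ):ℂ)^4 - 1)) • EA
      + (((u x:ℝ):ℂ) * (((γ x:ℝ):ℂ)^4 - 1) * ((F x:ℝ):ℂ)^2
          + ((u x:ℝ):ℂ) * (((γ x:ℝ):ℂ)^4 - 1) * ((F x:ℝ):ℂ)⁻¹^2) • EB
      + (((u x:ℝ):ℂ) * (((γ x:ℝ):ℂ)^2 + 1)^2 * ((F x:ℝ):ℂ)^2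
          + ((u x:ℝ):ℂ) * (((γ x:ℝ):ℂ)^2 - 1)^2 * ((F x:ℝ):ℂ)⁻¹^2) • EC
      + (((u x:ℝ):ℂ) * (((γ x:ℝ):ℂ)^2 + 1)^2 * ((F x:ℝ):ℂ)⁻¹^2
          + ((u x:ℝ):ℂ) * (((γ x:ℝ):ℂ)^2 - 1)^2 * ((F x:ℝ):ℂ)^2) • ED) l
      (nhds ((1/2:ℂ) • E0 + (-(1/2):ℂ) • EA + (-1:ℂ) • EB + (1:ℂ) • EC + (1:ℂ) • ED)) :=
    ((((hp.smul_const E0).add (hq.smul_const EA)).add (hqST.smul_const EB)).add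
      (hrC.smul_const EC)).add (hrD.smul_const ED)
  have htarget : (1/2:ℂ) • E0 + (-(1/2):ℂ) • EA + (-1:ℂ) • EB + (1:ℂ) • EC + (1:ℂ) • ED
      = ((4*(α:ℂ)^2-1)/16) • !![(-1:ℂ), Complex.I; Complex.I, 1] := by
    ext i j
    fin_cases i <;> fin_cases j <;>
      simp [hE0, hEA, hEB, hEC, hED, hc_def, Matrix.smul_apply, Matrix.add_apply] <;> ring
  rw [htarget] at hΨ
  refine Tendsto.congr' ?_ hΨ
  filter_upwards [hev] with x hx
  have hγp := hγpos x hx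
  have hFp := hFpos x hx
  have hG0 : ((γ x : ℝ) : ℂ) ≠ 0 := Complex.ofReal_ne_zero.2 hγp.ne'
  have hf0 : ((F x : ℝ) : ℂ) ≠ 0 := Complex.ofReal_ne_zero.2 hFp.ne'
  have hlamC : (((x-1)/(2*Real.log (φ x)) : ℝ) : ℂ) = ((u x:ℝ):ℂ) * ((γ x:ℝ):ℂ)^2 := by
    rw [hlam x hx]; push_cast; ring
  have hFsInv : (Fs x)⁻¹ = !![((F x:ℝ):ℂ)⁻¹, 0; 0, ((F x:ℝ):ℂ)] := by
    apply Matrix.inv_eq_right_inv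
    rw [hFs, Matrix.mul_fin_two]
    ext i j
    fin_cases i <;> fin_cases j <;>
      simp [Matrix.one_fin_two, mul_inv_cancel₀ hf0, inv_mul_cancel₀ hf0]
  have hMInv : (M x)⁻¹ = ((1:ℂ)/2) •
      !![((γ x : ℂ) + (γ x : ℂ)⁻¹), Complex.I * ((γ x : ℂ) - (γ x : ℂ)⁻¹);
         -(Complex.I * ((γ x : ℂ) - (γ x : ℂ)⁻¹)), ((γ x : ℂ) + (γ x : ℂ)⁻¹)] := by
    apply Matrix.inv_eq_right_inv
    rw [hM, Matrix.smul_mul, Matrix.mul_smul, smul_smul, Matrix.mul_fin_two]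
    ext i j
    fin_cases i <;> fin_cases j <;>
      simp [Matrix.one_fin_two, Matrix.smul_apply] <;>
      field_simp <;> ring_nf <;> simp only [hI2, hI3, hI4] <;> ring
  rw [hlamC, hFsInv, hMInv, hM, hFs, hA1, hE0, hEA, hEB, hEC, hED]
  exact (aux_prod c ((u x : ℝ) : ℂ) ((γ x : ℝ) : ℂ) (((γ x : ℝ) : ℂ))⁻¹
    ((F x : ℝ) : ℂ) (((F x : ℝ) : ℂ))⁻¹ (mul_inv_cancel₀ hG0) (mul_inv_cancel₀ hf0)).symm
end

section
/- For every real R > 1 and every integer m ≥ 0, the contour integral over the positively oriented circle of radius R centered at 0 satisfies ∮_{|ζ|=R} ζ^{2m} / ((ζ−1)^{1/2}(ζ+1)^{1/2}) dζ = 2πi · (1/2)_m / m!, where (1/2)_m is the Pochhammer symbol and each square root is the principal complex square root. In particular (m = 0), ∮_{|ζ|=R} dζ/((ζ−1)^{1/2}(ζ+1)^{1/2}) = 2πi. -/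
/-- The Pochhammer symbol (rising factorial) `(x)_m = x (x+1) ⋯ (x+m-1)`, with `(x)_0 = 1`. -/
noncomputable def pochC (x : ℂ) (m : ℕ) : ℂ := ∏ i ∈ Finset.range m, (x + (i : ℂ))

noncomputable def arR (k : ℕ) : ℝ := (∏ i ∈ Finset.range k, ((i:ℝ) + 1/2)) / k.factorial

lemma arR_zero : arR 0 = 1 := by simp [arR]

lemma arR_succ (k : ℕ) : arR (k+1) = arR k * (((k:ℝ) + 1/2) / ((k:ℝ) + 1)) := by
  unfold arR
  rw [Finset.prod_range_succ, Nat.factorial_succ]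
  push_cast
  field_simp
  ring

lemma arR_pos (k : ℕ) : 0 < arR k := by
  induction k with
  | zero => simp [arR_zero]
  | succ k ih => rw [arR_succ]; positivity

lemma arR_le_one (k : ℕ) : arR k ≤ 1 := by
  induction k with
  | zero => simp [arR_zero]
  | succ k ih =>
    rw [arR_succ]
    calc arR k * (((k:ℝ) + 1/2) / ((k:ℝ) + 1)) ≤ 1 * 1 := by
          apply mul_le_mul ih ?_ (by positivity) zero_le_one
          rw [div_le_one (by positivity)]; linarith
      _ = 1 := one_mul 1

lemma arR_succ_mul (k : ℕ) : arR (k+1) * ((k:ℝ) + 1) = arR k * ((k:ℝ) + 1/2) := by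
  rw [arR_succ]
  have : ((k:ℝ) + 1) ≠ 0 := by positivity
  field_simp

lemma arR_conv (n : ℕ) : ∑ j ∈ Finset.range (n+1), arR j * arR (n - j) = 1 := by
  induction n with
  | zero => simp [arR_zero]
  | succ n ih =>
    have refl1 : ∑ j ∈ Finset.range (n+2), ((n+1-j : ℕ):ℝ) * (arR j * arR (n+1-j))
        = ∑ j ∈ Finset.range (n+2), (j:ℝ) * (arR j * arR (n+1-j)) := by
      rw [← Finset.sum_range_reflect (fun j => ((j:ℕ):ℝ) * (arR j * arR (n+1-j))) (n+2)]
      apply Finset.sum_congr rfl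
      intro j hj
      rw [Finset.mem_range] at hj
      have h1 : n + 2 - 1 - j = n + 1 - j := by omega
      have h2 : n + 1 - (n + 1 - j) = j := by omega
      rw [h1, h2, mul_comm (arR (n+1-j)) (arR j)]
    have split : ((n:ℝ)+1) * ∑ j ∈ Finset.range (n+2), arR j * arR (n+1-j)
        = 2 * ∑ j ∈ Finset.range (n+2), (j:ℝ) * (arR j * arR (n+1-j)) := by
      rw [Finset.mul_sum, two_mul]
      nth_rewrite 2 [← refl1]
      rw [← Finset.sum_add_distrib]
      apply Finset.sum_congr rfl
      intro j hj
      rw [Finset.mem_range] at hj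
      have hc : ((n+1-j : ℕ):ℝ) = (n:ℝ) + 1 - (j:ℝ) := by
        rw [Nat.cast_sub (by omega)]; push_cast; ring
      rw [hc]; ring
    have drop0 : ∑ j ∈ Finset.range (n+2), (j:ℝ) * (arR j * arR (n+1-j))
        = ∑ i ∈ Finset.range (n+1), ((i:ℝ)+1) * (arR (i+1) * arR (n-i)) := by
      rw [Finset.sum_range_succ' (fun j => (j:ℝ) * (arR j * arR (n+1-j))) (n+1)]
      rw [Nat.cast_zero, zero_mul, add_zero]
      apply Finset.sum_congr rfl
      intro i hi
      have : n + 1 - (i+1) = n - i := by omega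
      rw [this]
      push_cast
      ring
    have rec1 : ∑ i ∈ Finset.range (n+1), ((i:ℝ)+1) * (arR (i+1) * arR (n-i))
        = ∑ i ∈ Finset.range (n+1), ((i:ℝ) + 1/2) * (arR i * arR (n-i)) := by
      apply Finset.sum_congr rfl
      intro i _
      have h := arR_succ_mul i
      calc ((i:ℝ)+1) * (arR (i+1) * arR (n-i)) = (arR (i+1) * ((i:ℝ)+1)) * arR (n-i) := by ring
        _ = (arR i * ((i:ℝ)+1/2)) * arR (n-i) := by rw [h]
        _ = ((i:ℝ) + 1/2) * (arR i * arR (n-i)) := by ring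
    have refl2 : ∑ i ∈ Finset.range (n+1), ((i:ℝ)+1/2) * (arR i * arR (n-i))
        = ∑ i ∈ Finset.range (n+1), (((n-i:ℕ):ℝ)+1/2) * (arR i * arR (n-i)) := by
      rw [← Finset.sum_range_reflect (fun i => (((i:ℕ):ℝ)+1/2) * (arR i * arR (n-i))) (n+1)]
      apply Finset.sum_congr rfl
      intro i hi
      rw [Finset.mem_range] at hi
      have h1 : n + 1 - 1 - i = n - i := by omega
      have h2 : n - (n - i) = i := by omega
      rw [h1, h2, mul_comm (arR (n-i)) (arR i)]
    have sum2 : 2 * ∑ i ∈ Finset.range (n+1), ((i:ℝ)+1/2) * (arR i * arR (n-i))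
        = ((n:ℝ)+1) * ∑ i ∈ Finset.range (n+1), arR i * arR (n-i) := by
      rw [two_mul]
      nth_rewrite 2 [refl2]
      rw [← Finset.sum_add_distrib, Finset.mul_sum]
      apply Finset.sum_congr rfl
      intro i hi
      rw [Finset.mem_range] at hi
      have hc : ((n-i : ℕ):ℝ) = (n:ℝ) - (i:ℝ) := by
        rw [Nat.cast_sub (by omega)]
      rw [hc]; ring
    have key : ((n:ℝ)+1) * ∑ j ∈ Finset.range (n+2), arR j * arR (n+1-j)
        = ((n:ℝ)+1) * ∑ j ∈ Finset.range (n+1), arR j * arR (n-j) := by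
      rw [split, drop0, rec1, sum2]
    have hne : ((n:ℝ)+1) ≠ 0 := by positivity
    have := mul_left_cancel₀ hne key
    rw [this, ih]

open Complex

noncomputable def Sc (w : ℂ) : ℂ := ∑' k, (arR k : ℂ) * w ^ k

lemma Sc_norm_le (w : ℂ) (k : ℕ) : ‖(arR k : ℂ) * w ^ k‖ ≤ ‖w‖ ^ k := by
  rw [norm_mul, norm_pow]
  have h1 : ‖((arR k : ℝ) : ℂ)‖ = arR k := by
    rw [Complex.norm_real, Real.norm_of_nonneg (arR_pos k).le]
  rw [h1]
  nth_rewrite 2 [← one_mul (‖w‖ ^ k)]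
  exact mul_le_mul_of_nonneg_right (arR_le_one k) (by positivity)

lemma Sc_summable_norm {w : ℂ} (hw : ‖w‖ < 1) :
    Summable (fun k => ‖(arR k : ℂ) * w ^ k‖) :=
  Summable.of_nonneg_of_le (fun _ => norm_nonneg _) (Sc_norm_le w)
    (summable_geometric_of_lt_one (norm_nonneg w) hw)

lemma Sc_hasSum {w : ℂ} (hw : ‖w‖ < 1) :
    HasSum (fun k => (arR k : ℂ) * w ^ k) (Sc w) :=
  (Sc_summable_norm hw).of_norm.hasSum

lemma Sc_sq {w : ℂ} (hw : ‖w‖ < 1) : Sc w * Sc w = (1 - w)⁻¹ := by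
  unfold Sc
  rw [tsum_mul_tsum_eq_tsum_sum_range_of_summable_norm (Sc_summable_norm hw) (Sc_summable_norm hw)]
  rw [← tsum_geometric_of_norm_lt_one hw]
  apply tsum_congr
  intro n
  have : ∀ k ∈ Finset.range (n+1),
      (arR k : ℂ) * w ^ k * ((arR (n-k) : ℂ) * w ^ (n-k)) = ((arR k * arR (n-k) : ℝ) : ℂ) * w ^ n := by
    intro k hk
    rw [Finset.mem_range] at hk
    have : w ^ k * w ^ (n - k) = w ^ n := by
      rw [← pow_add]
      congr 1
      omega
    push_cast
    rw [← this]
    ring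
  rw [Finset.sum_congr rfl this, ← Finset.sum_mul, ← Complex.ofReal_sum, arR_conv]
  simp

lemma Sc_ne_zero {w : ℂ} (hw : ‖w‖ < 1) : Sc w ≠ 0 := by
  intro h
  have h2 : (1 - w) ≠ 0 := by
    intro h3
    have : w = 1 := by linear_combination -h3
    rw [this] at hw; simp at hw
  have := Sc_sq hw
  rw [h, mul_zero] at this
  exact h2 (by simpa using (inv_eq_zero.mp this.symm))

lemma Sc_continuousAt {w : ℂ} (hw : ‖w‖ < 1) : ContinuousAt Sc w := by
  set r : ℝ := (1 + ‖w‖)/2 with hr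
  have hr1 : r < 1 := by rw [hr]; linarith
  have hrw : ‖w‖ < r := by rw [hr]; linarith
  have hr0 : 0 ≤ r := le_trans (norm_nonneg w) hrw.le
  have hcont : ContinuousOn Sc (Metric.ball 0 r) := by
    apply continuousOn_tsum (u := fun k => r ^ k)
    · intro k
      exact (continuous_const.mul (continuous_pow k)).continuousOn
    · exact summable_geometric_of_lt_one hr0 hr1
    · intro k x hx
      refine le_trans (Sc_norm_le x k) ?_
      apply pow_le_pow_left₀ (norm_nonneg x)
      rw [Metric.mem_ball, dist_zero_right] at hx
      exact hx.le
  exact hcont.continuousAt (Metric.isOpen_ball.mem_nhds (by rwa [Metric.mem_ball, dist_zero_right]))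


lemma Sc_def (w : ℂ) : Sc w = ∑' k, (arR k : ℂ) * w ^ k := rfl

open Complex Real

section Branch

variable {R : ℝ}

lemma zeta_abs (hR : 1 < R) (θ : ℝ) : ‖circleMap 0 R θ‖ = R := by
  rw [norm_circleMap_zero, abs_of_pos (by linarith)]

lemma zeta_ne (hR : 1 < R) (θ : ℝ) : circleMap 0 R θ ≠ 0 := by
  intro h
  have h2 := zeta_abs hR θ
  rw [h] at h2
  simp at h2
  linarith

lemma u_norm (hR : 1 < R) (θ : ℝ) : ‖((circleMap 0 R θ)⁻¹)^2‖ < 1 := by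
  rw [norm_pow, norm_inv, zeta_abs hR]
  have h1 : R⁻¹ < 1 := by
    rw [inv_lt_one_iff₀]; right; exact hR
  have h0 : 0 < R⁻¹ := by positivity
  nlinarith

lemma zeta_sq_sub_one_ne (hR : 1 < R) (θ : ℝ) : (circleMap 0 R θ)^2 - 1 ≠ 0 := by
  intro h
  have h2 : (circleMap 0 R θ)^2 = 1 := by linear_combination h
  have := congrArg (‖·‖) h2
  rw [norm_pow, zeta_abs hR, norm_one] at this
  nlinarith

lemma zeta_sub_one_ne (hR : 1 < R) (θ : ℝ) : circleMap 0 R θ - 1 ≠ 0 := by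
  intro h
  apply zeta_sq_sub_one_ne hR θ
  have : circleMap 0 R θ = 1 := by linear_combination h
  rw [this]; ring

lemma zeta_add_one_ne (hR : 1 < R) (θ : ℝ) : circleMap 0 R θ + 1 ≠ 0 := by
  intro h
  apply zeta_sq_sub_one_ne hR θ
  have : circleMap 0 R θ = -1 := by linear_combination h
  rw [this]; ring

/-- The quotient whose constancy expresses the branch identity. -/
noncomputable def qq (R θ : ℝ) : ℂ :=
  (circleMap 0 R θ - 1) ^ (1/2 : ℂ) * (circleMap 0 R θ + 1) ^ (1/2 : ℂ) *
    Sc (((circleMap 0 R θ)⁻¹)^2) * (circleMap 0 R θ)⁻¹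

lemma qq_sq (hR : 1 < R) (θ : ℝ) : qq R θ * qq R θ = 1 := by
  set ζ := circleMap 0 R θ with hζdef
  have hζ : ζ ≠ 0 := zeta_ne hR θ
  have hm : ζ - 1 ≠ 0 := zeta_sub_one_ne hR θ
  have hp : ζ + 1 ≠ 0 := zeta_add_one_ne hR θ
  have hsq : ζ^2 - 1 ≠ 0 := zeta_sq_sub_one_ne hR θ
  have hcp : ∀ z : ℂ, z ≠ 0 → z ^ (1/2:ℂ) * z ^ (1/2:ℂ) = z := by
    intro z hz
    rw [← Complex.cpow_add _ _ hz]
    norm_num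
  have h1u : (1:ℂ) - (ζ⁻¹)^2 ≠ 0 := by
    intro h
    apply hsq
    have h2 : (ζ⁻¹)^2 = 1 := by linear_combination -h
    field_simp at h2
    linear_combination -h2
  have hSc : Sc ((ζ⁻¹)^2) * Sc ((ζ⁻¹)^2) = (1 - (ζ⁻¹)^2)⁻¹ := Sc_sq (u_norm hR θ)
  calc qq R θ * qq R θ
      = ((ζ-1) ^ (1/2:ℂ) * (ζ-1) ^ (1/2:ℂ)) * ((ζ+1) ^ (1/2:ℂ) * (ζ+1) ^ (1/2:ℂ)) *
        (Sc ((ζ⁻¹)^2) * Sc ((ζ⁻¹)^2)) * (ζ⁻¹ * ζ⁻¹) := by rw [qq]; ring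
    _ = (ζ-1) * (ζ+1) * (1 - (ζ⁻¹)^2)⁻¹ * (ζ⁻¹ * ζ⁻¹) := by
        rw [hcp _ hm, hcp _ hp, hSc]
    _ = 1 := by field_simp; ring

lemma zeta_cases (hR : 1 < R) {θ : ℝ} (hθ : θ ∈ Set.Icc 0 (2*π)) (hne : θ ≠ π) :
    (circleMap 0 R θ).im ≠ 0 ∨ circleMap 0 R θ = (R:ℂ) := by
  have him : (circleMap 0 R θ).im = R * Real.sin θ := by
    simp [circleMap]
  by_cases hs : Real.sin θ = 0
  · right
    rw [Real.sin_eq_zero_iff] at hs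
    obtain ⟨n, hn⟩ := hs
    have hπ := Real.pi_pos
    obtain ⟨h0, h2⟩ := hθ
    have hge : 0 ≤ n := by
      by_contra hc
      push_neg at hc
      have hc1 : n ≤ -1 := by omega
      have : (n:ℝ) ≤ -1 := by exact_mod_cast hc1
      nlinarith
    have hle : n ≤ 2 := by
      by_contra hc
      push_neg at hc
      have hc1 : 3 ≤ n := by omega
      have : (3:ℝ) ≤ (n:ℝ) := by exact_mod_cast hc1
      nlinarith
    have hn1 : n ≠ 1 := by
      intro hc
      apply hne
      rw [← hn, hc]
      simp
    have hn0 : n = 0 ∨ n = 2 := by omega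
    rcases hn0 with h | h
    · have : θ = 0 := by rw [← hn, h]; simp
      rw [this]
      simp [circleMap]
    · have hθ2 : θ = 2 * π := by rw [← hn, h]; push_cast; ring
      rw [hθ2]
      rw [circleMap_zero]
      have : ((2 * π : ℝ) : ℂ) * I = 2 * ↑π * I := by push_cast; ring
      rw [this, Complex.exp_two_pi_mul_I, mul_one]
  · left
    rw [him]
    intro h
    rcases mul_eq_zero.mp h with h | h
    · linarith
    · exact hs h

lemma qq_continuousAt (hR : 1 < R) {θ : ℝ} (hθ : θ ∈ Set.Icc 0 (2*π)) (hne : θ ≠ π) :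
    ContinuousAt (qq R) θ := by
  have hζc : ContinuousAt (circleMap 0 R) θ := (continuous_circleMap 0 R).continuousAt
  have hcases := zeta_cases hR hθ hne
  have hu : ContinuousAt (fun t => ((circleMap 0 R t)⁻¹)^2) θ :=
    (hζc.inv₀ (zeta_ne hR θ)).pow 2
  have hScc : ContinuousAt (fun t => Sc (((circleMap 0 R t)⁻¹)^2)) θ := by
    have h := ContinuousAt.comp (x := θ) (f := fun t => ((circleMap 0 R t)⁻¹)^2)
      (Sc_continuousAt (u_norm hR θ)) hu
    exact h
  have hm : ContinuousAt (fun t => (circleMap 0 R t - 1) ^ (1/2:ℂ)) θ := by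
    apply ContinuousAt.cpow (hζc.sub continuousAt_const) continuousAt_const
    rcases hcases with h | h
    · right; simpa using h
    · left; show 0 < (circleMap 0 R θ - 1).re; rw [h]; simp; linarith
  have hp : ContinuousAt (fun t => (circleMap 0 R t + 1) ^ (1/2:ℂ)) θ := by
    apply ContinuousAt.cpow (hζc.add continuousAt_const) continuousAt_const
    rcases hcases with h | h
    · right; simpa using h
    · left; show 0 < (circleMap 0 R θ + 1).re; rw [h]; simp; linarith
  exact ((hm.mul hp).mul hScc).mul (hζc.inv₀ (zeta_ne hR θ))

lemma qq_at_R (hR : 1 < R) (θ : ℝ) (h : circleMap 0 R θ = (R:ℂ)) : qq R θ = 1 := by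
  have hR0 : (0:ℝ) < R := by linarith
  have hx0 : (0:ℝ) ≤ (R⁻¹)^2 := by positivity
  have hx1 : (R⁻¹)^2 < 1 := by
    have h1 : R⁻¹ < 1 := by rw [inv_lt_one_iff₀]; right; exact hR
    have h0 : (0:ℝ) < R⁻¹ := by positivity
    nlinarith
  have hsum : Summable (fun k => arR k * ((R⁻¹)^2)^k) := by
    apply Summable.of_nonneg_of_le
      (fun k => mul_nonneg (arR_pos k).le (pow_nonneg hx0 k)) (fun k => ?_)
      (summable_geometric_of_lt_one hx0 hx1)
    calc arR k * ((R⁻¹)^2)^k ≤ 1 * ((R⁻¹)^2)^k :=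
          mul_le_mul_of_nonneg_right (arR_le_one k) (pow_nonneg hx0 k)
      _ = ((R⁻¹)^2)^k := one_mul _
  set t : ℝ := ∑' k, arR k * ((R⁻¹)^2)^k with ht
  have htpos : 0 < t := by
    apply Summable.tsum_pos hsum (fun k => mul_nonneg (arR_pos k).le (pow_nonneg hx0 k)) 0
    rw [pow_zero, mul_one, arR_zero]
    norm_num
  have hSceq : Sc ((((R:ℝ):ℂ)⁻¹)^2) = (t:ℂ) := by
    rw [ht, Complex.ofReal_tsum]
    unfold Sc
    apply tsum_congr
    intro k
    push_cast
    ring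
  have hq : qq R θ = ((((R-1) ^ (1/2:ℝ) * (R+1) ^ (1/2:ℝ) * t * R⁻¹ : ℝ)):ℂ) := by
    rw [qq, h]
    have e1 : (R:ℂ) - 1 = (((R - 1 : ℝ)):ℂ) := by push_cast; ring
    have e2 : (R:ℂ) + 1 = (((R + 1 : ℝ)):ℂ) := by push_cast; ring
    have e3 : ((1:ℂ)/2) = (((1/2 : ℝ)):ℂ) := by push_cast; ring
    rw [e1, e2, e3, ← Complex.ofReal_cpow (by linarith), ← Complex.ofReal_cpow (by linarith),
      hSceq]
    push_cast
    ring
  have hqq := qq_sq hR θ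
  rw [hq] at hqq ⊢
  have h1 : ((R-1) ^ (1/2:ℝ) * (R+1) ^ (1/2:ℝ) * t * R⁻¹ : ℝ) > 0 := by
    have := Real.rpow_pos_of_pos (show (0:ℝ) < R - 1 by linarith) (1/2)
    have := Real.rpow_pos_of_pos (show (0:ℝ) < R + 1 by linarith) (1/2)
    positivity
  have h2 : ((R-1) ^ (1/2:ℝ) * (R+1) ^ (1/2:ℝ) * t * R⁻¹ : ℝ) = 1 := by
    have h3 : (((R-1) ^ (1/2:ℝ) * (R+1) ^ (1/2:ℝ) * t * R⁻¹) * ((R-1) ^ (1/2:ℝ) * (R+1) ^ (1/2:ℝ) * t * R⁻¹) : ℝ) = 1 := by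
      exact_mod_cast hqq
    nlinarith [h3, h1]
  rw [h2]
  norm_num

lemma qq_eq_one (hR : 1 < R) {θ : ℝ} (hθ : θ ∈ Set.Icc 0 (2*π)) (hne : θ ≠ π) :
    qq R θ = 1 := by
  have hπ := Real.pi_pos
  by_contra hq
  have hqm : qq R θ = -1 := by
    rcases mul_self_eq_one_iff.mp (qq_sq hR θ) with h | h
    · exact absurd h hq
    · exact h
  obtain ⟨h0, h2⟩ := hθ
  have hre : ∀ t, t ∈ Set.Icc 0 (2*π) → t ≠ π → ((qq R t).re = 1 ∨ (qq R t).re = -1) := by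
    intro t _ _
    rcases mul_self_eq_one_iff.mp (qq_sq hR t) with h | h
    · left; rw [h]; rfl
    · right; rw [h]; rfl
  rcases lt_or_gt_of_ne hne with hlt | hgt
  · -- θ < π, use interval [0, θ]
    have hcont : ContinuousOn (fun t => (qq R t).re) (Set.Icc 0 θ) := by
      intro t ht
      have ht' : t ∈ Set.Icc 0 (2*π) := ⟨ht.1, by linarith [ht.2]⟩
      have htne : t ≠ π := by intro h; rw [h] at ht; linarith [ht.2]
      exact (Complex.continuous_re.continuousAt.comp (qq_continuousAt hR ht' htne)).continuousWithinAt
    have hq0 : (qq R 0).re = 1 := by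
      rw [qq_at_R hR 0 (by simp [circleMap])]; rfl
    have hqθ : (qq R θ).re = -1 := by rw [hqm]; rfl
    have := intermediate_value_Icc' h0 hcont
    have h0mem : (0:ℝ) ∈ Set.Icc ((fun t => (qq R t).re) θ) ((fun t => (qq R t).re) 0) := by
      simp only [hqθ, hq0]; constructor <;> norm_num
    obtain ⟨t, ht, hft⟩ := this h0mem
    have ht' : t ∈ Set.Icc 0 (2*π) := ⟨ht.1, by linarith [ht.2]⟩
    have htne : t ≠ π := by intro h; rw [h] at ht; linarith [ht.2]
    have hft' : (qq R t).re = 0 := hft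
    rcases hre t ht' htne with h | h <;> rw [hft'] at h <;> norm_num at h
  · -- θ > π, use interval [θ, 2π]
    have hcont : ContinuousOn (fun t => (qq R t).re) (Set.Icc θ (2*π)) := by
      intro t ht
      have ht' : t ∈ Set.Icc 0 (2*π) := ⟨by linarith [ht.1], ht.2⟩
      have htne : t ≠ π := by intro h; rw [h] at ht; linarith [ht.1]
      exact (Complex.continuous_re.continuousAt.comp (qq_continuousAt hR ht' htne)).continuousWithinAt
    have hq2 : (qq R (2*π)).re = 1 := by
      rw [qq_at_R hR (2*π) ?_]
      · rfl
      · rw [circleMap_zero]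
        have : ((2 * π : ℝ) : ℂ) * I = 2 * ↑π * I := by push_cast; ring
        rw [this, Complex.exp_two_pi_mul_I, mul_one]
    have hqθ : (qq R θ).re = -1 := by rw [hqm]; rfl
    have := intermediate_value_Icc h2 hcont
    have h0mem : (0:ℝ) ∈ Set.Icc ((fun t => (qq R t).re) θ) ((fun t => (qq R t).re) (2*π)) := by
      simp only [hqθ, hq2]; constructor <;> norm_num
    obtain ⟨t, ht, hft⟩ := this h0mem
    have ht' : t ∈ Set.Icc 0 (2*π) := ⟨by linarith [ht.1], ht.2⟩
    have htne : t ≠ π := by intro h; rw [h] at ht; linarith [ht.1]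
    have hft' : (qq R t).re = 0 := hft
    rcases hre t ht' htne with h | h <;> rw [hft'] at h <;> norm_num at h

/-- The key branch identity on the circle. -/
lemma inv_N (hR : 1 < R) {θ : ℝ} (hθ : θ ∈ Set.Icc 0 (2*π)) (hne : θ ≠ π) :
    ((circleMap 0 R θ - 1) ^ (1/2 : ℂ) * (circleMap 0 R θ + 1) ^ (1/2 : ℂ))⁻¹
      = Sc (((circleMap 0 R θ)⁻¹)^2) * (circleMap 0 R θ)⁻¹ := by
  have h := qq_eq_one hR hθ hne
  rw [qq] at h
  exact inv_eq_of_mul_eq_one_right (by linear_combination h)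

end Branch


open Complex Real MeasureTheory intervalIntegral

lemma main_integral (R : ℝ) (hR : 1 < R) (m : ℕ) :
    (∮ ζ in C(0, R), ζ ^ (2*m) / ((ζ - 1) ^ (1/2:ℂ) * (ζ + 1) ^ (1/2:ℂ)))
      = 2 * (π:ℝ) * Complex.I * (arR m : ℂ) := by
  have hπ := Real.pi_pos
  have hR0 : (0:ℝ) < R := by linarith
  have hRne : R ≠ 0 := ne_of_gt hR0
  let F : ℕ → ℝ → ℂ := fun k θ =>
    (circleMap 0 R θ * I) * ((arR k : ℂ) * (circleMap 0 R θ) ^ (2*(m:ℤ) - 1 - 2*(k:ℤ)))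
  -- pointwise identity off θ = π
  have hpt : ∀ θ ∈ Set.Icc (0:ℝ) (2*π), θ ≠ π →
      deriv (circleMap 0 R) θ • ((circleMap 0 R θ) ^ (2*m) /
        ((circleMap 0 R θ - 1) ^ (1/2:ℂ) * (circleMap 0 R θ + 1) ^ (1/2:ℂ)))
      = ∑' k, F k θ := by
    intro θ hθ hne
    set ζ := circleMap 0 R θ with hζdef
    have hζ : ζ ≠ 0 := zeta_ne hR θ
    have hterm : ∀ k : ℕ, F k θ = (ζ * I * (ζ ^ (2*m) * ζ⁻¹)) * ((arR k : ℂ) * ((ζ⁻¹^2))^k) := by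
      intro k
      have hzp : (ζ:ℂ) ^ (2*(m:ℤ) - 1 - 2*(k:ℤ)) = ζ ^ (2*m) * ((ζ⁻¹^2)^k * ζ⁻¹) := by
        rw [zpow_sub₀ hζ, zpow_sub₀ hζ, zpow_one]
        have e1 : (ζ:ℂ) ^ (2*(m:ℤ)) = ζ ^ (2*m) := by
          rw [show (2*(m:ℤ)) = ((2*m : ℕ) : ℤ) by push_cast; ring, zpow_natCast]
        have e2 : (ζ:ℂ) ^ (2*(k:ℤ)) = ζ ^ (2*k) := by
          rw [show (2*(k:ℤ)) = ((2*k : ℕ) : ℤ) by push_cast; ring, zpow_natCast]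
        have e3 : ((ζ⁻¹)^2)^k = (ζ^(2*k))⁻¹ := by rw [← pow_mul, inv_pow]
        rw [e1, e2, e3, div_div, div_eq_mul_inv, mul_inv]
        ring
      show (ζ * I) * ((arR k : ℂ) * ζ ^ (2*(m:ℤ) - 1 - 2*(k:ℤ)))
          = (ζ * I * (ζ ^ (2*m) * ζ⁻¹)) * ((arR k : ℂ) * ((ζ⁻¹^2))^k)
      rw [hzp]
      ring
    rw [deriv_circleMap, smul_eq_mul, div_eq_mul_inv, inv_N hR hθ hne,
      Sc_def _, ← hζdef, tsum_congr hterm, tsum_mul_left]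
    ring
  -- rewrite circle integral as set integral of the tsum
  have h1 : (∮ ζ in C(0, R), ζ ^ (2*m) / ((ζ - 1) ^ (1/2:ℂ) * (ζ + 1) ^ (1/2:ℂ)))
      = ∫ θ in Set.Ioc (0:ℝ) (2*π), ∑' k, F k θ := by
    rw [circleIntegral, intervalIntegral.integral_of_le (by positivity)]
    apply MeasureTheory.setIntegral_congr_ae measurableSet_Ioc
    have hae : ∀ᵐ (θ:ℝ), θ ≠ π := by
      rw [MeasureTheory.ae_iff]
      have : {θ : ℝ | ¬ θ ≠ π} = {π} := by ext x; simp
      rw [this]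
      exact Real.volume_singleton
    filter_upwards [hae] with θ hne hθ
    exact hpt θ ⟨hθ.1.le, hθ.2⟩ hne
  rw [h1]
  -- swap sum and integral
  have hcont : ∀ k, Continuous (F k) := by
    intro k
    apply Continuous.mul (Continuous.mul (continuous_circleMap 0 R) continuous_const)
    apply Continuous.mul continuous_const
    exact (continuous_circleMap 0 R).zpow₀ _ (fun θ => Or.inl (zeta_ne hR θ))
  have hFnorm : ∀ k θ, ‖F k θ‖ = R * (arR k * R ^ (2*(m:ℤ) - 1 - 2*(k:ℤ))) := by
    intro k θ
    show ‖(circleMap 0 R θ * I) * ((arR k : ℂ) * (circleMap 0 R θ) ^ (2*(m:ℤ) - 1 - 2*(k:ℤ)))‖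
      = R * (arR k * R ^ (2*(m:ℤ) - 1 - 2*(k:ℤ)))
    simp only [norm_mul, Complex.norm_I, mul_one, norm_zpow, zeta_abs hR,
      Complex.norm_real, Real.norm_eq_abs, abs_of_pos (arR_pos k)]
  have hvalnorm : ∀ k, ∫ θ in Set.Ioc (0:ℝ) (2*π), ‖F k θ‖
      = (2*π) * (R * (arR k * R ^ (2*(m:ℤ) - 1 - 2*(k:ℤ)))) := by
    intro k
    have e : (fun θ => ‖F k θ‖) = fun _ => R * (arR k * R ^ (2*(m:ℤ) - 1 - 2*(k:ℤ))) := by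
      funext θ; exact hFnorm k θ
    rw [e, MeasureTheory.setIntegral_const, measureReal_def, Real.volume_Ioc, smul_eq_mul]
    rw [ENNReal.toReal_ofReal (by linarith)]
    ring
  have hsummable : Summable (fun k => (2*π) * (R * (arR k * R ^ (2*(m:ℤ) - 1 - 2*(k:ℤ))))) := by
    have hq0 : (0:ℝ) ≤ (R^2)⁻¹ := by positivity
    have hq1 : ((R:ℝ)^2)⁻¹ < 1 := by
      rw [inv_lt_one_iff₀]; right; nlinarith
    refine Summable.of_nonneg_of_le (fun k => ?_) (fun k => ?_)
      ((summable_geometric_of_lt_one hq0 hq1).mul_left ((2*π) * (R * R ^ (2*(m:ℤ) - 1))))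
    · have h1 := arR_pos k
      have h2 : (0:ℝ) < R ^ (2*(m:ℤ) - 1 - 2*(k:ℤ)) := zpow_pos hR0 _
      positivity
    · have hsplit : R ^ (2*(m:ℤ) - 1 - 2*(k:ℤ)) = R ^ (2*(m:ℤ) - 1) * ((R^2)⁻¹)^k := by
        rw [show (2*(m:ℤ) - 1 - 2*(k:ℤ)) = (2*(m:ℤ) - 1) + (-2)*(k:ℤ) by ring,
          zpow_add₀ hRne]
        congr 1
        rw [show ((-2)*(k:ℤ)) = (-2:ℤ)*(k:ℕ) by ring, zpow_mul, zpow_natCast]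
        congr 1
      rw [hsplit]
      have h1 : arR k ≤ 1 := arR_le_one k
      have h2 : (0:ℝ) < R ^ (2*(m:ℤ) - 1) := zpow_pos hR0 _
      have h3 : (0:ℝ) ≤ ((R^2)⁻¹)^k := by positivity
      calc (2*π) * (R * (arR k * (R ^ (2*(m:ℤ) - 1) * ((R^2)⁻¹)^k)))
          ≤ (2*π) * (R * (1 * (R ^ (2*(m:ℤ) - 1) * ((R^2)⁻¹)^k))) := by
            apply mul_le_mul_of_nonneg_left _ (by positivity)
            apply mul_le_mul_of_nonneg_left _ (by positivity)
            apply mul_le_mul_of_nonneg_right h1 (by positivity)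
        _ = ((2*π) * (R * R ^ (2*(m:ℤ) - 1))) * ((R^2)⁻¹)^k := by ring
  have hswap : ∫ θ in Set.Ioc (0:ℝ) (2*π), ∑' k, F k θ = ∑' k, ∫ θ in Set.Ioc (0:ℝ) (2*π), F k θ := by
    refine (MeasureTheory.integral_tsum_of_summable_integral_norm
      (fun k => ((hcont k).integrableOn_Ioc)) ?_).symm
    exact hsummable.congr (fun k => (hvalnorm k).symm)
  rw [hswap]
  -- evaluate each circle integral
  have hval : ∀ k : ℕ, ∫ θ in Set.Ioc (0:ℝ) (2*π), F k θ
      = if k = m then (arR m : ℂ) * (2 * (π:ℝ) * I) else 0 := by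
    intro k
    have hcirc : ∫ θ in Set.Ioc (0:ℝ) (2*π), F k θ
        = ∮ z in C(0, R), (arR k : ℂ) • (z - 0) ^ (2*(m:ℤ) - 1 - 2*(k:ℤ)) := by
      rw [← intervalIntegral.integral_of_le (by positivity : (0:ℝ) ≤ 2*π), circleIntegral]
      apply intervalIntegral.integral_congr
      intro θ _
      simp only [deriv_circleMap, smul_eq_mul, sub_zero]
      rfl
    rw [hcirc, circleIntegral.integral_smul]
    by_cases hk : k = m
    · subst hk
      have hn : 2*(k:ℤ) - 1 - 2*(k:ℤ) = -1 := by ring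
      rw [hn]
      have hinv : (∮ z in C(0, R), (z - 0) ^ (-1:ℤ)) = ∮ z in C(0, R), (z - (0:ℂ))⁻¹ := by
        apply circleIntegral.integral_congr (le_of_lt hR0)
        intro z _
        simp [zpow_neg_one]
      rw [hinv, circleIntegral.integral_sub_inv_of_mem_ball (Metric.mem_ball_self hR0)]
      simp
    · rw [if_neg hk]
      have hn : 2*(m:ℤ) - 1 - 2*(k:ℤ) ≠ -1 := by
        intro h
        apply hk
        omega
      rw [circleIntegral.integral_sub_zpow_of_ne hn, smul_zero]
  rw [tsum_congr hval, tsum_eq_single m (fun k hk => if_neg hk), if_pos rfl]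
  ring


lemma arR_eq_poch (m : ℕ) : (arR m : ℂ) = pochC (1/2) m / (m.factorial : ℂ) := by
  unfold arR pochC
  rw [Complex.ofReal_div, Complex.ofReal_prod]
  congr 1
  exact Finset.prod_congr rfl (fun i _ => by push_cast; ring)

/-- for `R > 1` and `m ≥ 0`,
`∮_{|ζ|=R} ζ^{2m} / ((ζ-1)^{1/2}(ζ+1)^{1/2}) dζ = 2πi (1/2)_m / m!`; in particular (`m = 0`)
`∮_{|ζ|=R} dζ/((ζ-1)^{1/2}(ζ+1)^{1/2}) = 2πi`. -/
theorem circle_integral_even_power (R : ℝ) (hR : 1 < R) (m : ℕ) :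
    (∮ ζ in C(0, R), ζ ^ (2 * m) / ((ζ - 1) ^ (1 / 2 : ℂ) * (ζ + 1) ^ (1 / 2 : ℂ)))
        = 2 * Real.pi * Complex.I * pochC (1 / 2) m / (m.factorial : ℂ) ∧
      (∮ ζ in C(0, R), 1 / ((ζ - 1) ^ (1 / 2 : ℂ) * (ζ + 1) ^ (1 / 2 : ℂ)))
        = 2 * Real.pi * Complex.I := by
  constructor
  · rw [main_integral R hR m, arR_eq_poch m]
    ring
  · have h0 := main_integral R hR 0
    simp only [mul_zero, pow_zero, arR_zero, Complex.ofReal_one, mul_one] at h0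
    rw [h0]
end

section
/- For every real R > 1 and every integer m ≥ 0, the contour integral over the positively oriented circle of radius R centered at 0 satisfies ∮_{|ζ|=R} ζ^{2m+1} / ((ζ−1)^{1/2}(ζ+1)^{1/2}) dζ = 0, where each square root is the principal complex square root. -/
open Complex Real

/-- Auxiliary: principal square root of `-w` in terms of that of `w`. -/
lemma neg_cpow_half (w : ℂ) (hw : w ≠ 0) :
    (-w) ^ (1 / 2 : ℂ) =
      (if 0 < w.im ∨ (w.im = 0 ∧ w.re < 0) then -Complex.I else Complex.I)
        * w ^ (1 / 2 : ℂ) := by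
  have hw' : (-w) ≠ 0 := neg_ne_zero.mpr hw
  have habs : ‖-w‖ = ‖w‖ := norm_neg _
  by_cases h : 0 < w.im ∨ (w.im = 0 ∧ w.re < 0)
  · have harg : Complex.arg (-w) = Complex.arg w - π := by
      rcases h with h | ⟨h1, h2⟩
      · exact Complex.arg_neg_eq_arg_sub_pi_of_im_pos h
      · have hw0 : w = (w.re : ℂ) := by
          apply Complex.ext <;> simp [h1]
        rw [hw0]
        rw [show (-(w.re : ℂ)) = ((-w.re : ℝ) : ℂ) by push_cast; ring]
        rw [Complex.arg_ofReal_of_nonneg (by linarith), Complex.arg_ofReal_of_neg h2]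
        ring
    have hlog : Complex.log (-w) = Complex.log w + (-π : ℝ) * Complex.I := by
      apply Complex.ext
      · simp [Complex.log_re, habs]
      · simp [Complex.log_im, harg]; ring
    rw [if_pos h, Complex.cpow_def_of_ne_zero hw', Complex.cpow_def_of_ne_zero hw, hlog]
    rw [show (Complex.log w + (-π : ℝ) * Complex.I) * (1 / 2)
        = Complex.log w * (1 / 2) + (-(π / 2) : ℝ) * Complex.I by push_cast; ring]
    rw [Complex.exp_add, Complex.exp_mul_I]
    push_cast
    rw [Complex.cos_neg, Complex.sin_neg, Complex.cos_pi_div_two, Complex.sin_pi_div_two]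
    ring
  · have harg : Complex.arg (-w) = Complex.arg w + π := by
      push_neg at h
      rcases lt_or_eq_of_le h.1 with hlt | heq
      · exact Complex.arg_neg_eq_arg_add_pi_of_im_neg hlt
      · have him0 : w.im = 0 := heq
        have hre0 : 0 ≤ w.re := h.2 him0
        have hre : 0 < w.re := by
          rcases hre0.lt_or_eq with h' | h'
          · exact h'
          · exact absurd (Complex.ext h'.symm him0) hw
        have hw0 : w = (w.re : ℂ) := Complex.ext rfl (by simp [him0])
        rw [hw0, show (-(w.re : ℂ)) = ((-w.re : ℝ) : ℂ) by push_cast; ring]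
        rw [Complex.arg_ofReal_of_neg (by linarith), Complex.arg_ofReal_of_nonneg hre.le]
        ring
    have hlog : Complex.log (-w) = Complex.log w + (π : ℝ) * Complex.I := by
      apply Complex.ext
      · simp [Complex.log_re, habs]
      · simp [Complex.log_im, harg]
    rw [if_neg h, Complex.cpow_def_of_ne_zero hw', Complex.cpow_def_of_ne_zero hw, hlog]
    rw [show (Complex.log w + (π : ℝ) * Complex.I) * (1 / 2)
        = Complex.log w * (1 / 2) + ((π / 2) : ℝ) * Complex.I by push_cast; ring]
    rw [Complex.exp_add, Complex.exp_mul_I]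
    push_cast
    rw [Complex.cos_pi_div_two, Complex.sin_pi_div_two]
    ring

/-- Auxiliary: the branch `(ζ-1)^{1/2}(ζ+1)^{1/2}` is odd outside the unit disk. -/
lemma sqrt_prod_neg (ζ : ℂ) (hζ : 1 < ‖ζ‖) :
    (-ζ - 1) ^ (1 / 2 : ℂ) * (-ζ + 1) ^ (1 / 2 : ℂ)
      = -((ζ - 1) ^ (1 / 2 : ℂ) * (ζ + 1) ^ (1 / 2 : ℂ)) := by
  have h1 : ζ - 1 ≠ 0 := by
    intro h
    rw [sub_eq_zero] at h
    simp [h] at hζ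
  have h2 : ζ + 1 ≠ 0 := by
    intro h
    have : ζ = -1 := by linear_combination h
    simp [this] at hζ
  have e1 : -ζ - 1 = -(ζ + 1) := by ring
  have e2 : -ζ + 1 = -(ζ - 1) := by ring
  rw [e1, e2, neg_cpow_half _ h2, neg_cpow_half _ h1]
  have him : (ζ + 1).im = (ζ - 1).im := by simp
  have hcond : (0 < (ζ + 1).im ∨ ((ζ + 1).im = 0 ∧ (ζ + 1).re < 0))
      ↔ (0 < (ζ - 1).im ∨ ((ζ - 1).im = 0 ∧ (ζ - 1).re < 0)) := by
    rw [him]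
    constructor
    · rintro (h | ⟨ha, hb⟩)
      · exact Or.inl h
      · refine Or.inr ⟨ha, ?_⟩
        simp only [add_im] at ha him
        simp only [sub_re, add_re, one_re, one_im] at hb ⊢
        linarith
    · rintro (h | ⟨ha, hb⟩)
      · exact Or.inl h
      · refine Or.inr ⟨ha, ?_⟩
        have him0 : ζ.im = 0 := by simpa using ha
        have habs' : ‖ζ‖ = |ζ.re| := by
          rw [show ζ = (ζ.re : ℂ) from Complex.ext rfl (by simp [him0])]
          simp
        have h1' : 1 < |ζ.re| := habs' ▸ hζ
        simp only [sub_re, one_re] at hb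
        simp only [add_re, one_re]
        have : ζ.re < -1 := by
          rcases lt_abs.mp h1' with h' | h'
          · linarith
          · linarith
        linarith
  by_cases hc : 0 < (ζ + 1).im ∨ ((ζ + 1).im = 0 ∧ (ζ + 1).re < 0)
  · rw [if_pos hc, if_pos (hcond.mp hc)]
    linear_combination ((ζ + 1) ^ (1/2 : ℂ) * (ζ - 1) ^ (1/2 : ℂ)) * Complex.I_sq
  · rw [if_neg hc, if_neg (fun h => hc (hcond.mpr h))]
    linear_combination ((ζ + 1) ^ (1/2 : ℂ) * (ζ - 1) ^ (1/2 : ℂ)) * Complex.I_sq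

/-- for `R > 1` and `m ≥ 0`,
`∮_{|ζ|=R} ζ^{2m+1} / ((ζ-1)^{1/2}(ζ+1)^{1/2}) dζ = 0` (principal square roots). -/
theorem circle_integral_odd_power (R : ℝ) (hR : 1 < R) (m : ℕ) :
    (∮ ζ in C(0, R), ζ ^ (2 * m + 1) / ((ζ - 1) ^ (1 / 2 : ℂ) * (ζ + 1) ^ (1 / 2 : ℂ))) = 0 := by
  set f : ℂ → ℂ := fun ζ => ζ ^ (2 * m + 1) / ((ζ - 1) ^ (1 / 2 : ℂ) * (ζ + 1) ^ (1 / 2 : ℂ)) with hf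
  set F : ℝ → ℂ := fun θ => deriv (circleMap 0 R) θ • f (circleMap 0 R θ) with hF
  have hFdef : (∮ ζ in C(0, R), f ζ) = ∫ θ in (0:ℝ)..(2 * π), F θ := rfl
  -- f is even on |ζ| > 1
  have hfe : ∀ ζ : ℂ, 1 < ‖ζ‖ → f (-ζ) = f ζ := by
    intro ζ hζ
    have hodd : Odd (2 * m + 1) := ⟨m, by ring⟩
    simp only [hf]
    rw [hodd.neg_pow, sqrt_prod_neg ζ hζ, neg_div_neg_eq]
  -- circleMap shifts by π to its negative
  have hshift : ∀ θ : ℝ, circleMap 0 R (θ + π) = -circleMap 0 R θ := by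
    intro θ
    simp only [circleMap, zero_add]
    rw [show ((θ + π : ℝ) : ℂ) * Complex.I = (θ : ℝ) * Complex.I + π * Complex.I by
      push_cast; ring]
    rw [Complex.exp_add, Complex.exp_pi_mul_I]
    ring
  have habs : ∀ θ : ℝ, 1 < ‖circleMap 0 R θ‖ := by
    intro θ
    rw [norm_circleMap_zero, abs_of_pos (by linarith : (0:ℝ) < R)]
    exact hR
  -- F(θ + π) = -F(θ)
  have hFshift : ∀ θ : ℝ, F (θ + π) = -F θ := by
    intro θ
    simp only [hF, deriv_circleMap, hshift θ]
    rw [hfe _ (habs θ)]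
    simp only [smul_eq_mul]
    ring
  -- F is periodic with period 2π
  have hper : Function.Periodic F (2 * π) := by
    intro θ
    simp only [hF, deriv_circleMap]
    rw [periodic_circleMap 0 R θ]
  -- conclude
  rw [hFdef]
  have h2 : (∫ θ in (0:ℝ)..(2 * π), F (θ + π)) = ∫ θ in (0 + π:ℝ)..(2 * π + π), F θ :=
    intervalIntegral.integral_comp_add_right F π
  have h1 : (∫ θ in (π:ℝ)..(π + 2 * π), F θ) = ∫ θ in (0:ℝ)..(0 + 2 * π), F θ :=
    hper.intervalIntegral_add_eq π 0
  have key : (∫ θ in (0:ℝ)..(2 * π), F θ) = -∫ θ in (0:ℝ)..(2 * π), F θ := by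
    calc (∫ θ in (0:ℝ)..(2 * π), F θ) = ∫ θ in (0 + π:ℝ)..(2 * π + π), F θ := by
          rw [show (0 + π:ℝ) = π by ring, show (2 * π + π:ℝ) = π + 2 * π by ring, h1, zero_add]
      _ = ∫ θ in (0:ℝ)..(2 * π), F (θ + π) := h2.symm
      _ = ∫ θ in (0:ℝ)..(2 * π), -F θ := intervalIntegral.integral_congr (fun θ _ => hFshift θ)
      _ = -∫ θ in (0:ℝ)..(2 * π), F θ := intervalIntegral.integral_neg
  exact add_self_eq_zero.mp (by linear_combination key)
end
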